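/- arXiv:1310.7359 — 7 statements merged into one kernel-verified Lean document; each statement's English description precedes it below -/
import Mathlib

section
/- For k ≥ 2, if H is a k-uniform hypergraph with no isolated vertices, no isolated edges and no multiple edges, then 2·n(H) − n₁(H) ≥ 2k, where n₁(H) denotes the number of vertices of degree 1 in H. -/
open Finset

attribute [local instance] Classical.propDecidable

variable {V : Type*} [Fintype V] [DecidableEq V]

/-- Two vertices are adjacent (neighbors) in a hypergraph if they are distinct
and share a common edge. -/
def HAdj (E : Finset (Finset V)) (u v : V) : Prop :=
  u ≠ v ∧ ∃ e ∈ E, u ∈ e ∧ v ∈ e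

/-- A hypergraph is `k`-uniform if every edge has exactly `k` vertices. -/
def Uniform (k : ℕ) (E : Finset (Finset V)) : Prop := ∀ e ∈ E, e.card = k

/-- No edge is isolated: every edge intersects some other edge. -/
def NoIsolatedEdge (E : Finset (Finset V)) : Prop :=
  ∀ e ∈ E, ∃ f ∈ E, f ≠ e ∧ ∃ v, v ∈ e ∧ v ∈ f

/-- The degree of a vertex: the number of edges containing it. -/
def hdeg (E : Finset (Finset V)) (v : V) : ℕ := (E.filter (fun e => v ∈ e)).card

/-- The number of vertices of degree exactly 1. -/
noncomputable def n1 (E : Finset (Finset V)) : ℕ :=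
  (univ.filter (fun v => hdeg E v = 1)).card

/-- The total domination number: minimum size of a set `D` such that every
vertex has a neighbor in `D`. -/
noncomputable def gammat (E : Finset (Finset V)) : ℕ :=
  sInf {n | ∃ D : Finset V, (∀ v : V, ∃ u ∈ D, HAdj E v u) ∧ D.card = n}

/-- The transversal number: minimum size of a vertex set meeting every edge. -/
noncomputable def tauh (E : Finset (Finset V)) : ℕ :=
  sInf {n | ∃ T : Finset V, (∀ e ∈ E, ∃ v ∈ T, v ∈ e) ∧ T.card = n}

/-- The total transversal number: minimum size of a transversal `T` in which
every vertex of `T` has a neighbor in `T`. -/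
noncomputable def taut (E : Finset (Finset V)) : ℕ :=
  sInf {n | ∃ T : Finset V, (∀ e ∈ E, ∃ v ∈ T, v ∈ e) ∧
    (∀ v ∈ T, ∃ u ∈ T, HAdj E v u) ∧ T.card = n}

/-- The strong transversal number: minimum size of a vertex set containing at
least two vertices from every edge. -/
noncomputable def tau2 (E : Finset (Finset V)) : ℕ :=
  sInf {n | ∃ T : Finset V, (∀ e ∈ E, 2 ≤ (e ∩ T).card) ∧ T.card = n}

/-- For `k ≥ 2`, if `H` is a `k`-uniform hypergraph with no isolated vertices,
no isolated edges (and no multiple edges), then `2·n(H) − n₁(H) ≥ 2k`. -/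
theorem stmt3 [Nonempty V] (k : ℕ) (hk : 2 ≤ k) (E : Finset (Finset V))
    (hu : Uniform k E)
    (hv : ∀ v : V, ∃ e ∈ E, v ∈ e)
    (he : NoIsolatedEdge E) :
    2 * k ≤ 2 * Fintype.card V - n1 E := by
  obtain ⟨v0⟩ := ‹Nonempty V›
  obtain ⟨e, heE, -⟩ := hv v0
  obtain ⟨f, hfE, hfe, w, hwe, hwf⟩ := he e heE
  have hcu : (e ∪ f).card + (e ∩ f).card = 2 * k := by
    rw [Finset.card_union_add_card_inter, hu e heE, hu f hfE]; ring
  have h1 : (e ∪ f).card ≤ Fintype.card V := (e ∪ f).card_le_univ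
  -- vertices in e ∩ f have degree ≥ 2
  have hsub : e ∩ f ⊆ univ.filter (fun v => 2 ≤ hdeg E v) := by
    intro v hvmem
    simp only [Finset.mem_inter] at hvmem
    simp only [Finset.mem_filter, Finset.mem_univ, true_and]
    have : ({e, f} : Finset (Finset V)) ⊆ E.filter (fun g => v ∈ g) := by
      intro g hg
      simp only [Finset.mem_insert, Finset.mem_singleton] at hg
      rcases hg with rfl | rfl <;> simp [Finset.mem_filter, heE, hfE, hvmem.1, hvmem.2]
    have h2 : ({e, f} : Finset (Finset V)).card = 2 := by
      rw [Finset.card_insert_of_notMem (by simpa using (hfe ∘ Eq.symm)), Finset.card_singleton]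
    calc 2 = ({e, f} : Finset (Finset V)).card := h2.symm
      _ ≤ _ := Finset.card_le_card this
      _ = hdeg E v := rfl
  have hdisj : Disjoint (univ.filter (fun v => hdeg E v = 1))
      (univ.filter (fun v => 2 ≤ hdeg E v)) := by
    rw [Finset.disjoint_filter]
    intro v _ h1 h2
    omega
  have hle : n1 E + (e ∩ f).card ≤ Fintype.card V := by
    have h3 : n1 E + (univ.filter (fun v => 2 ≤ hdeg E v)).card ≤ Fintype.card V := by
      rw [n1, ← Finset.card_union_of_disjoint hdisj]
      exact Finset.card_le_univ _
    have h4 := Finset.card_le_card hsub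
    omega
  omega
end

section
/- Let k ≥ 2, let F be a k-uniform hypergraph with no isolated vertices, no isolated edges and no multiple edges, and let H be obtained from F by adding, for each vertex v of F, k new vertices v₁,…,v_k and two new k-edges {v,v₁,…,v_{k−1}} and {v₁,…,v_k}. Then γ_t(H) = 2·n(H)/(k+1). -/
open Finset

attribute [local instance] Classical.propDecidable

variable {V : Type*} [Fintype V] [DecidableEq V]

/-- For a vertex `v` of `F`, the added edge `{v, v₁, …, v_{k−1}}`, where the new
vertex `v_j` (for `1 ≤ j ≤ k`) is encoded as `Sum.inr (v, j-1)`. -/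
noncomputable def pendant1 {α : Type*} (k : ℕ) (v : α) : Finset (α ⊕ α × Fin k) :=
  insert (Sum.inl v)
    ((univ.filter (fun i : Fin k => (i : ℕ) < k - 1)).image (fun i => Sum.inr (v, i)))

/-- For a vertex `v` of `F`, the added edge `{v₁, …, v_k}`. -/
noncomputable def pendant2 {α : Type*} (k : ℕ) (v : α) : Finset (α ⊕ α × Fin k) :=
  univ.image (fun i : Fin k => Sum.inr (v, i))

set_option linter.unusedSectionVars false

section Aux

variable {α : Type*} [Fintype α] [DecidableEq α]

lemma p1_inl_mem (k : ℕ) (v : α) : Sum.inl v ∈ pendant1 k v := by simp [pendant1]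

lemma p1_inl_iff {k : ℕ} {v w : α} : Sum.inl w ∈ pendant1 k v ↔ w = v := by
  simp [pendant1]

lemma p1_inr_iff {k : ℕ} {v w : α} {i : Fin k} :
    Sum.inr (w, i) ∈ pendant1 k v ↔ w = v ∧ (i : ℕ) < k - 1 := by
  simp only [pendant1, mem_insert, mem_image, mem_filter, mem_univ, true_and]
  constructor
  · rintro (h | ⟨j, hj, h⟩)
    · exact absurd h (by simp)
    · obtain ⟨rfl, rfl⟩ : v = w ∧ j = i := by simpa [Prod.ext_iff, eq_comm] using h
      exact ⟨rfl, hj⟩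
  · rintro ⟨rfl, h⟩
    exact Or.inr ⟨i, h, rfl⟩

lemma p2_mem {k : ℕ} (v : α) (i : Fin k) : Sum.inr (v, i) ∈ pendant2 k v := by
  simp [pendant2]

lemma p2_iff {k : ℕ} {v : α} {x : α ⊕ α × Fin k} :
    x ∈ pendant2 k v ↔ ∃ i, x = Sum.inr (v, i) := by
  simp [pendant2, eq_comm]

/-- Sv: the set of vertices associated to a base vertex v. -/
noncomputable def Sv (k : ℕ) (v : α) : Finset (α ⊕ α × Fin k) :=
  insert (Sum.inl v) (univ.image fun i : Fin k => Sum.inr (v, i))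

lemma mem_Sv {k : ℕ} {v : α} {x : α ⊕ α × Fin k} :
    x ∈ Sv k v ↔ x = Sum.inl v ∨ ∃ i, x = Sum.inr (v, i) := by
  simp [Sv, eq_comm]

lemma edge_mem_iff {k : ℕ} {EF : Finset (Finset α)}
    {e : Finset (α ⊕ α × Fin k)}
    (h : e ∈ EF.image (fun e => e.image Sum.inl) ∪
        univ.image (pendant1 k) ∪ univ.image (pendant2 k)) :
    (∃ f ∈ EF, e = f.image Sum.inl) ∨ (∃ v, e = pendant1 k v) ∨ (∃ v, e = pendant2 k v) := by
  simp only [mem_union, mem_image, mem_univ, true_and] at h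
  rcases h with (⟨f, hf, rfl⟩ | ⟨v, rfl⟩) | ⟨v, rfl⟩
  · exact Or.inl ⟨f, hf, rfl⟩
  · exact Or.inr (Or.inl ⟨v, rfl⟩)
  · exact Or.inr (Or.inr ⟨v, rfl⟩)

/-- Any edge containing an added vertex of v is contained in Sv v. -/
lemma edge_sub_Sv {k : ℕ} {EF : Finset (Finset α)} {v : α} {i : Fin k}
    {e : Finset (α ⊕ α × Fin k)}
    (h : e ∈ EF.image (fun e => e.image Sum.inl) ∪
        univ.image (pendant1 k) ∪ univ.image (pendant2 k))
    (hi : Sum.inr (v, i) ∈ e) : e ⊆ Sv k v := by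
  rcases edge_mem_iff h with ⟨f, hf, rfl⟩ | ⟨w, rfl⟩ | ⟨w, rfl⟩
  · simp at hi
  · obtain ⟨rfl, -⟩ := p1_inr_iff.mp hi
    intro x hx
    rcases x with a | ⟨a, j⟩
    · rw [p1_inl_iff] at hx; subst hx; exact mem_Sv.mpr (Or.inl rfl)
    · obtain ⟨rfl, -⟩ := p1_inr_iff.mp hx
      exact mem_Sv.mpr (Or.inr ⟨j, rfl⟩)
  · obtain ⟨j, hj⟩ := p2_iff.mp hi
    obtain rfl : v = w := (by simpa [Prod.ext_iff] using hj : v = w ∧ _).1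
    intro x hx
    obtain ⟨j', rfl⟩ := p2_iff.mp hx
    exact mem_Sv.mpr (Or.inr ⟨j', rfl⟩)

end Aux

/-- Let `k ≥ 2`, let `F` be a `k`-uniform hypergraph with no isolated vertices,
no isolated edges and no multiple edges, and let `H` be obtained from `F` by
adding, for each vertex `v` of `F`, `k` new vertices `v₁, …, v_k` and the two new
`k`-edges `{v, v₁, …, v_{k−1}}` and `{v₁, …, v_k}`. Then
`γ_t(H) = 2·n(H)/(k+1)`. -/
theorem stmt4 {α : Type*} [Fintype α] [DecidableEq α] (k : ℕ) (hk : 2 ≤ k)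
    (EF : Finset (Finset α)) (hu : Uniform k EF)
    (hv : ∀ v : α, ∃ e ∈ EF, v ∈ e) (he : NoIsolatedEdge EF) :
    (gammat (EF.image (fun e => e.image Sum.inl) ∪
        univ.image (pendant1 k) ∪ univ.image (pendant2 k)) : ℝ) =
      2 * Fintype.card (α ⊕ α × Fin k) / (k + 1) := by
  have hk0 : 0 < k := by omega
  set E := EF.image (fun e => e.image Sum.inl) ∪
      univ.image (pendant1 k) ∪ univ.image (pendant2 k) with hE
  have hp1E : ∀ v : α, pendant1 k v ∈ E := fun v =>
    mem_union_left _ (mem_union_right _ (mem_image_of_mem _ (mem_univ v)))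
  have hp2E : ∀ v : α, pendant2 k v ∈ E := fun v =>
    mem_union_right _ (mem_image_of_mem _ (mem_univ v))
  set i0 : Fin k := ⟨0, hk0⟩ with hi0
  set iK : Fin k := ⟨k - 1, by omega⟩ with hiK
  -- the candidate total dominating set
  set D : Finset (α ⊕ α × Fin k) :=
    univ.image Sum.inl ∪ univ.image (fun v : α => Sum.inr (v, i0)) with hD
  have hDdom : ∀ w : α ⊕ α × Fin k, ∃ u ∈ D, HAdj E w u := by
    rintro (v | ⟨v, i⟩)
    · refine ⟨Sum.inr (v, i0), mem_union_right _ (mem_image_of_mem _ (mem_univ v)),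
        by simp, pendant1 k v, hp1E v, p1_inl_mem k v, p1_inr_iff.mpr ⟨rfl, show (0:ℕ) < k - 1 by omega⟩⟩
    · by_cases hi : i = i0
      · subst hi
        refine ⟨Sum.inl v, mem_union_left _ (mem_image_of_mem _ (mem_univ v)),
          by simp, pendant1 k v, hp1E v, p1_inr_iff.mpr ⟨rfl, show (0:ℕ) < k - 1 by omega⟩, p1_inl_mem k v⟩
      · refine ⟨Sum.inr (v, i0), mem_union_right _ (mem_image_of_mem _ (mem_univ v)),
          by simp [Prod.ext_iff, hi], pendant2 k v, hp2E v, p2_mem v i, p2_mem v i0⟩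
  have hDcard : D.card = 2 * Fintype.card α := by
    rw [hD, card_union_of_disjoint, card_image_of_injective _ Sum.inl_injective,
      card_image_of_injective _ (fun a b h => by simpa using h), card_univ]
    · ring
    · simp [disjoint_left]
  -- only edge containing (v, iK) is pendant2 v
  have hlast : ∀ (v : α) (e : Finset (α ⊕ α × Fin k)), e ∈ E → Sum.inr (v, iK) ∈ e →
      e = pendant2 k v := by
    intro v e heE hin
    rcases edge_mem_iff heE with ⟨f, hf, rfl⟩ | ⟨w, rfl⟩ | ⟨w, rfl⟩
    · simp at hin
    · obtain ⟨-, h⟩ := p1_inr_iff.mp hin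
      simp [hiK] at h
    · obtain ⟨j, hj⟩ := p2_iff.mp hin
      obtain rfl : w = v := ((Prod.ext_iff.mp (Sum.inr.inj hj)).1).symm
      rfl
  have hgam : gammat E = 2 * Fintype.card α := by
    have hmem : 2 * Fintype.card α ∈
        {n | ∃ D : Finset (α ⊕ α × Fin k), (∀ v, ∃ u ∈ D, HAdj E v u) ∧ D.card = n} :=
      ⟨D, hDdom, hDcard⟩
    refine le_antisymm (Nat.sInf_le hmem) (le_csInf ⟨_, hmem⟩ ?_)
    rintro n ⟨D', hdom, rfl⟩
    -- each Sv contributes at least 2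
    have hSv2 : ∀ v : α, 2 ≤ (D' ∩ Sv k v).card := by
      intro v
      obtain ⟨x, hxD, hne, e, heE, hin, hxe⟩ := hdom (Sum.inr (v, iK))
      have hep2 := hlast v e heE hin
      subst hep2
      obtain ⟨j, rfl⟩ := p2_iff.mp hxe
      obtain ⟨y, hyD, hne2, f, hfE, hxf, hyf⟩ := hdom (Sum.inr (v, j))
      have hySv : y ∈ Sv k v := edge_sub_Sv hfE hxf hyf
      have hxSv : Sum.inr (v, j) ∈ Sv k v := mem_Sv.mpr (Or.inr ⟨j, rfl⟩)
      exact one_lt_card.mpr ⟨_, mem_inter.mpr ⟨hxD, hxSv⟩, y,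
        mem_inter.mpr ⟨hyD, hySv⟩, hne2⟩
    -- Sv's are pairwise disjoint
    have hdisj : ((univ : Finset α) : Set α).PairwiseDisjoint (fun v => D' ∩ Sv k v) := by
      intro a _ b _ hab
      simp only [disjoint_left, mem_inter]
      rintro x ⟨-, hxa⟩ ⟨-, hxb⟩
      rcases mem_Sv.mp hxa with rfl | ⟨i, rfl⟩
      · rcases mem_Sv.mp hxb with h | ⟨i', h⟩
        · exact hab (Sum.inl.inj h)
        · exact absurd h (by simp)
      · rcases mem_Sv.mp hxb with h | ⟨i', h⟩
        · exact absurd h (by simp)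
        · exact hab (Prod.ext_iff.mp (Sum.inr.inj h)).1
    calc 2 * Fintype.card α = ∑ _v : α, 2 := by simp [mul_comm]
      _ ≤ ∑ v : α, (D' ∩ Sv k v).card := Finset.sum_le_sum fun v _ => hSv2 v
      _ = (univ.biUnion fun v => D' ∩ Sv k v).card := (card_biUnion hdisj).symm
      _ ≤ D'.card := card_le_card (by
          intro x hx; obtain ⟨v, -, hv'⟩ := mem_biUnion.mp hx
          exact (mem_inter.mp hv').1)
  rw [hgam]
  have : Fintype.card (α ⊕ α × Fin k) = Fintype.card α * (k + 1) := by
    simp [Fintype.card_sum, Fintype.card_prod]; ring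
  rw [this]
  have hk1 : (k : ℝ) + 1 ≠ 0 := by positivity
  push_cast
  field_simp
end

section
/- If H is a linear 2-regular hypergraph (every vertex has degree exactly 2, every two edges share at most one vertex), then the total transversal number of H equals the minimum size of a total edge-cover of the dual graph G_H of H. -/
open Finset

attribute [local instance] Classical.propDecidable

variable {V : Type*} [Fintype V] [DecidableEq V]

/-- The dual graph of a linear hypergraph: vertices are the edges of `H`, with
two edges of `H` adjacent iff they share a vertex of `H`. -/
def dualGraph (E : Finset (Finset V)) : SimpleGraph {e // e ∈ E} where
  Adj e f := e ≠ f ∧ ∃ v : V, v ∈ e.1 ∧ v ∈ f.1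
  symm := by
    constructor
    rintro e f ⟨h, v, hv1, hv2⟩
    exact ⟨h.symm, v, hv2, hv1⟩
  loopless := by
    constructor
    intro e h
    exact h.1 rfl

/-- The minimum size of a total edge-cover of a graph `G`: a set of edges of `G`
covering every vertex, in which no edge is isolated (every edge of the set
shares an endpoint with another edge of the set). -/
noncomputable def ect {W : Type*} (G : SimpleGraph W) : ℕ :=
  sInf {n | ∃ S : Finset (Sym2 W), (∀ s ∈ S, s ∈ G.edgeSet) ∧
    (∀ w : W, ∃ s ∈ S, w ∈ s) ∧
    (∀ s ∈ S, ∃ t ∈ S, t ≠ s ∧ ∃ w : W, w ∈ s ∧ w ∈ t) ∧ S.card = n}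

section Aux

variable (E : Finset (Finset V)) (hreg : ∀ v : V, hdeg E v = 2)

include hreg

lemma pair_spec (v : V) :
    ∃ p : {e // e ∈ E} × {e // e ∈ E}, p.1 ≠ p.2 ∧
      E.filter (fun e => v ∈ e) = {p.1.1, p.2.1} := by
  have h2 : (E.filter (fun e => v ∈ e)).card = 2 := hreg v
  obtain ⟨a, b, hab, hfe⟩ := Finset.card_eq_two.1 h2
  have ha : a ∈ E := (Finset.mem_filter.1 (hfe ▸ (by simp : a ∈ ({a, b} : Finset (Finset V))))).1
  have hb : b ∈ E := (Finset.mem_filter.1 (hfe ▸ (by simp : b ∈ ({a, b} : Finset (Finset V))))).1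
  exact ⟨(⟨a, ha⟩, ⟨b, hb⟩), by simpa [Subtype.ext_iff] using hab, hfe⟩

noncomputable def phi (v : V) : Sym2 {e // e ∈ E} :=
  s((pair_spec E hreg v).choose.1, (pair_spec E hreg v).choose.2)

lemma phi_mem (v : V) (e : Finset V) (he : e ∈ E) :
    v ∈ e ↔ (⟨e, he⟩ : {e // e ∈ E}) ∈ phi E hreg v := by
  obtain ⟨hne, hfe⟩ := (pair_spec E hreg v).choose_spec
  constructor
  · intro hv
    have : e ∈ E.filter (fun e => v ∈ e) := Finset.mem_filter.2 ⟨he, hv⟩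
    rw [hfe] at this
    simp only [Finset.mem_insert, Finset.mem_singleton] at this
    rcases this with h | h
    · exact Sym2.mem_iff.2 (Or.inl (Subtype.ext h))
    · exact Sym2.mem_iff.2 (Or.inr (Subtype.ext h))
  · intro hv
    rcases Sym2.mem_iff.1 hv with h | h
    · have h' := congrArg Subtype.val h
      have hmem : e ∈ E.filter (fun e => v ∈ e) := by
        rw [hfe]
        simp only [Finset.mem_insert, Finset.mem_singleton]
        exact Or.inl h'
      exact (Finset.mem_filter.1 hmem).2
    · have h' := congrArg Subtype.val h
      have hmem : e ∈ E.filter (fun e => v ∈ e) := by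
        rw [hfe]
        simp only [Finset.mem_insert, Finset.mem_singleton]
        exact Or.inr h'
      exact (Finset.mem_filter.1 hmem).2

lemma phi_edge (v : V) : phi E hreg v ∈ (dualGraph E).edgeSet := by
  obtain ⟨hne, hfe⟩ := (pair_spec E hreg v).choose_spec
  set p := (pair_spec E hreg v).choose
  rw [phi, SimpleGraph.mem_edgeSet]
  refine ⟨hne, v, ?_, ?_⟩
  · have : p.1.1 ∈ E.filter (fun e => v ∈ e) := by rw [hfe]; simp
    exact (Finset.mem_filter.1 this).2
  · have : p.2.1 ∈ E.filter (fun e => v ∈ e) := by rw [hfe]; simp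
    exact (Finset.mem_filter.1 this).2

lemma phi_inj (hlin : ∀ e ∈ E, ∀ f ∈ E, e ≠ f → (e ∩ f).card ≤ 1) :
    Function.Injective (phi E hreg) := by
  intro u v huv
  by_contra hne
  obtain ⟨hpne, hfe⟩ := (pair_spec E hreg v).choose_spec
  set p := (pair_spec E hreg v).choose
  have hva : v ∈ p.1.1 := by
    have : p.1.1 ∈ E.filter (fun e => v ∈ e) := by rw [hfe]; simp
    exact (Finset.mem_filter.1 this).2
  have hvb : v ∈ p.2.1 := by
    have : p.2.1 ∈ E.filter (fun e => v ∈ e) := by rw [hfe]; simp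
    exact (Finset.mem_filter.1 this).2
  have hua : u ∈ p.1.1 := by
    have h1 : p.1 ∈ phi E hreg v := Sym2.mem_iff.2 (Or.inl rfl)
    rw [← huv] at h1
    exact (phi_mem E hreg u p.1.1 p.1.2).2 h1
  have hub : u ∈ p.2.1 := by
    have h1 : p.2 ∈ phi E hreg v := Sym2.mem_iff.2 (Or.inr rfl)
    rw [← huv] at h1
    exact (phi_mem E hreg u p.2.1 p.2.2).2 h1
  have hsub : ({u, v} : Finset V) ⊆ p.1.1 ∩ p.2.1 := by
    intro x hx
    simp only [Finset.mem_insert, Finset.mem_singleton] at hx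
    rcases hx with rfl | rfl <;> exact Finset.mem_inter.2 ⟨by assumption, by assumption⟩
  have hcard : 2 ≤ (p.1.1 ∩ p.2.1).card := by
    calc 2 = ({u, v} : Finset V).card := (Finset.card_pair hne).symm
    _ ≤ _ := Finset.card_le_card hsub
  have := hlin p.1.1 p.1.2 p.2.1 p.2.2 (fun h => hpne (Subtype.ext h))
  omega

lemma phi_surj (s : Sym2 {e // e ∈ E}) (hs : s ∈ (dualGraph E).edgeSet) :
    ∃ v : V, phi E hreg v = s := by
  induction s using Sym2.inductionOn with
  | hf a b =>
    rw [SimpleGraph.mem_edgeSet] at hs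
    obtain ⟨hab, v, hva, hvb⟩ := hs
    refine ⟨v, ?_⟩
    obtain ⟨hpne, hfe⟩ := (pair_spec E hreg v).choose_spec
    set p := (pair_spec E hreg v).choose
    have ha : a = p.1 ∨ a = p.2 := by
      have : a.1 ∈ E.filter (fun e => v ∈ e) := Finset.mem_filter.2 ⟨a.2, hva⟩
      rw [hfe] at this
      simp only [Finset.mem_insert, Finset.mem_singleton] at this
      rcases this with h | h
      · exact Or.inl (Subtype.ext h)
      · exact Or.inr (Subtype.ext h)
    have hb : b = p.1 ∨ b = p.2 := by
      have : b.1 ∈ E.filter (fun e => v ∈ e) := Finset.mem_filter.2 ⟨b.2, hvb⟩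
      rw [hfe] at this
      simp only [Finset.mem_insert, Finset.mem_singleton] at this
      rcases this with h | h
      · exact Or.inl (Subtype.ext h)
      · exact Or.inr (Subtype.ext h)
    rw [phi]
    rcases ha with rfl | rfl <;> rcases hb with rfl | rfl
    · exact absurd rfl hab
    · rfl
    · exact Sym2.eq_swap
    · exact absurd rfl hab

end Aux

/-- If `H` is a linear 2-regular hypergraph, then the total transversal number
of `H` equals the minimum size of a total edge-cover of the dual graph of `H`. -/
theorem stmt5 (E : Finset (Finset V))
    (hreg : ∀ v : V, hdeg E v = 2)
    (hlin : ∀ e ∈ E, ∀ f ∈ E, e ≠ f → (e ∩ f).card ≤ 1) :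
    taut E = ect (dualGraph E) := by
  have hinj := phi_inj E hreg hlin
  unfold taut ect
  congr 1
  ext n
  constructor
  · rintro ⟨T, htrans, htot, hcard⟩
    refine ⟨T.image (phi E hreg), ?_, ?_, ?_, ?_⟩
    · intro s hs
      obtain ⟨v, _, rfl⟩ := Finset.mem_image.1 hs
      exact phi_edge E hreg v
    · rintro ⟨e, he⟩
      obtain ⟨v, hvT, hve⟩ := htrans e he
      exact ⟨phi E hreg v, Finset.mem_image_of_mem _ hvT, (phi_mem E hreg v e he).1 hve⟩
    · intro s hs
      obtain ⟨v, hvT, rfl⟩ := Finset.mem_image.1 hs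
      obtain ⟨u, huT, hne, e, he, hve, hue⟩ := htot v hvT
      refine ⟨phi E hreg u, Finset.mem_image_of_mem _ huT, ?_, ⟨e, he⟩,
        (phi_mem E hreg v e he).1 hve, (phi_mem E hreg u e he).1 hue⟩
      intro h
      exact hne (hinj h).symm
    · rw [Finset.card_image_of_injective _ hinj, hcard]
  · rintro ⟨S, hedge, hcover, htot, hcard⟩
    refine ⟨univ.filter (fun v => phi E hreg v ∈ S), ?_, ?_, ?_⟩
    · intro e he
      obtain ⟨s, hsS, hws⟩ := hcover ⟨e, he⟩
      obtain ⟨v, rfl⟩ := phi_surj E hreg s (hedge s hsS)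
      exact ⟨v, Finset.mem_filter.2 ⟨Finset.mem_univ v, hsS⟩,
        (phi_mem E hreg v e he).2 hws⟩
    · intro v hv
      have hvS : phi E hreg v ∈ S := (Finset.mem_filter.1 hv).2
      obtain ⟨t, htS, htne, w, hws, hwt⟩ := htot _ hvS
      obtain ⟨u, rfl⟩ := phi_surj E hreg t (hedge t htS)
      refine ⟨u, Finset.mem_filter.2 ⟨Finset.mem_univ u, htS⟩, ?_, w.1, w.2,
        (phi_mem E hreg v w.1 w.2).2 hws, (phi_mem E hreg u w.1 w.2).2 hwt⟩
      rintro rfl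
      exact htne rfl
    · have himg : (univ.filter (fun v => phi E hreg v ∈ S)).image (phi E hreg) = S := by
        ext s
        constructor
        · intro hs
          obtain ⟨v, hv, rfl⟩ := Finset.mem_image.1 hs
          exact (Finset.mem_filter.1 hv).2
        · intro hs
          obtain ⟨v, rfl⟩ := phi_surj E hreg s (hedge s hs)
          exact Finset.mem_image_of_mem _ (Finset.mem_filter.2 ⟨Finset.mem_univ v, hs⟩)
      rw [← hcard]
      conv_rhs => rw [← himg]
      exact (Finset.card_image_of_injective _ hinj).symm
end

section
/- If H is a 2-uniform hypergraph (a graph) with no isolated vertices, no isolated edges and no multiple edges, then τ_t(H) ≤ 2(n(H) + m(H))/5. -/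
open Finset

attribute [local instance] Classical.propDecidable

variable {V : Type*} [Fintype V] [DecidableEq V]

set_option linter.unusedSectionVars false
set_option linter.unusedVariables false

/-- An edge is isolated in `E` if it shares no vertex with any other edge. -/
def IsolEdge (E : Finset (Finset V)) (e : Finset V) : Prop :=
  ∀ f ∈ E, f ≠ e → ∀ v ∈ e, v ∉ f

def Good (E : Finset (Finset V)) (T : Finset V) : Prop :=
  (∀ e ∈ E, ∃ v ∈ T, v ∈ e) ∧ (∀ v ∈ T, ∃ u ∈ T, HAdj E v u) ∧
    5 * T.card ≤ 2 * (E.biUnion id).card + 2 * E.card + 4 * (E.filter (IsolEdge E)).card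

lemma hadj_mono {E E' : Finset (Finset V)} (h : E' ⊆ E) {a b : V} (hab : HAdj E' a b) :
    HAdj E a b := ⟨hab.1, by obtain ⟨e, he, h1, h2⟩ := hab.2; exact ⟨e, h he, h1, h2⟩⟩

lemma pair_of_mem_card_two {e : Finset V} (h : e.card = 2) {v : V} (hv : v ∈ e) :
    ∃ w, w ≠ v ∧ e = {v, w} := by
  rw [Finset.card_eq_two] at h
  obtain ⟨a, b, hab, rfl⟩ := h
  rcases Finset.mem_insert.1 hv with rfl | hv'
  · exact ⟨b, fun h => hab h.symm, rfl⟩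
  · rcases Finset.mem_singleton.1 hv' with rfl
    exact ⟨a, fun h => hab h, by rw [Finset.pair_comm]⟩

lemma eq_of_deg_one {E : Finset (Finset V)} {u : V} {e g : Finset V} (he : e ∈ E)
    (hue : u ∈ e) (hd : hdeg E u = 1) (hg : g ∈ E) (hug : u ∈ g) : g = e := by
  rw [hdeg, Finset.card_eq_one] at hd
  obtain ⟨a, ha⟩ := hd
  have h1 : e ∈ E.filter (fun e => u ∈ e) := Finset.mem_filter.2 ⟨he, hue⟩
  have h2 : g ∈ E.filter (fun e => u ∈ e) := Finset.mem_filter.2 ⟨hg, hug⟩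
  rw [ha, Finset.mem_singleton] at h1 h2
  rw [h1, h2]

lemma mem_of_deg_two {E : Finset (Finset V)} {v : V} {e f g : Finset V} (he : e ∈ E)
    (hf : f ∈ E) (hef : e ≠ f) (hve : v ∈ e) (hvf : v ∈ f) (hd : hdeg E v = 2)
    (hg : g ∈ E) (hvg : v ∈ g) : g = e ∨ g = f := by
  have hsub : ({e, f} : Finset (Finset V)) ⊆ E.filter (fun x => v ∈ x) := by
    intro x hx
    rcases Finset.mem_insert.1 hx with rfl | hx
    · exact Finset.mem_filter.2 ⟨he, hve⟩
    · rw [Finset.mem_singleton] at hx; subst hx; exact Finset.mem_filter.2 ⟨hf, hvf⟩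
  have hc : (E.filter (fun x => v ∈ x)).card ≤ ({e, f} : Finset (Finset V)).card := by
    rw [Finset.card_pair hef, ← hdeg, hd]
  have heq := Finset.eq_of_subset_of_card_le hsub hc
  have : g ∈ ({e, f} : Finset (Finset V)) := heq ▸ Finset.mem_filter.2 ⟨hg, hvg⟩
  simpa using this

lemma good_case1 (E : Finset (Finset V)) (hu : Uniform 2 E)
    (e : Finset V) (he : e ∈ E) (hiso : IsolEdge E e)
    (T' : Finset V) (hg : Good (E.erase e) T') : ∃ T, Good E T := by
  obtain ⟨u, v, huv, hef⟩ := Finset.card_eq_two.1 (hu e he)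
  refine ⟨T' ∪ {u, v}, ?_, ?_, ?_⟩
  · intro g hg'
    by_cases hge : g = e
    · exact ⟨u, Finset.mem_union_right _ (by simp), by rw [hge, hef]; simp⟩
    · obtain ⟨x, hx1, hx2⟩ := hg.1 g (Finset.mem_erase.2 ⟨hge, hg'⟩)
      exact ⟨x, Finset.mem_union_left _ hx1, hx2⟩
  · intro x hx
    rcases Finset.mem_union.1 hx with hx | hx
    · obtain ⟨y, hy1, hy2⟩ := hg.2.1 x hx
      exact ⟨y, Finset.mem_union_left _ hy1, hadj_mono (Finset.erase_subset _ _) hy2⟩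
    · rcases Finset.mem_insert.1 hx with rfl | hx
      · exact ⟨v, Finset.mem_union_right _ (by simp), huv, e, he, by rw [hef]; simp⟩
      · rw [Finset.mem_singleton] at hx; subst hx
        exact ⟨u, Finset.mem_union_right _ (by simp), huv.symm, e, he, by rw [hef]; simp⟩
  · -- cardinality bookkeeping
    have hT : (T' ∪ {u, v}).card ≤ T'.card + 2 := by
      refine (Finset.card_union_le _ _).trans ?_
      simp [Finset.card_pair huv]
    have hm : (E.erase e).card + 1 = E.card := Finset.card_erase_add_one he
    -- support count
    have huE : u ∈ e := by rw [hef]; simp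
    have hvE : v ∈ e := by rw [hef]; simp
    have hnotin : ∀ x ∈ e, x ∉ (E.erase e).biUnion id := by
      intro x hxe hx
      obtain ⟨g, hgE, hxg⟩ := Finset.mem_biUnion.1 hx
      have := hiso g (Finset.mem_erase.1 hgE).2 (Finset.mem_erase.1 hgE).1 x hxe
      exact this hxg
    have hdisj : Disjoint ({u, v} : Finset V) ((E.erase e).biUnion id) := by
      rw [Finset.disjoint_left]
      intro x hx
      apply hnotin x
      rcases Finset.mem_insert.1 hx with rfl | hx
      · exact huE
      · rw [Finset.mem_singleton] at hx; subst hx; exact hvE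
    have hsub : ({u, v} : Finset V) ∪ (E.erase e).biUnion id ⊆ E.biUnion id := by
      intro x hx
      rcases Finset.mem_union.1 hx with hx | hx
      · refine Finset.mem_biUnion.2 ⟨e, he, ?_⟩
        rcases Finset.mem_insert.1 hx with rfl | hx
        · exact huE
        · rw [Finset.mem_singleton] at hx; subst hx; exact hvE
      · obtain ⟨g, hgE, hxg⟩ := Finset.mem_biUnion.1 hx
        exact Finset.mem_biUnion.2 ⟨g, Finset.mem_of_mem_erase hgE, hxg⟩
    have hn : 2 + ((E.erase e).biUnion id).card ≤ (E.biUnion id).card := by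
      have := Finset.card_le_card hsub
      rwa [Finset.card_union_of_disjoint hdisj, Finset.card_pair huv] at this
    -- isolated edge count
    have hk : ((E.erase e).filter (IsolEdge (E.erase e))) = (E.filter (IsolEdge E)).erase e := by
      ext g
      simp only [Finset.mem_filter, Finset.mem_erase]
      constructor
      · rintro ⟨⟨hge, hgE⟩, hgi⟩
        refine ⟨hge, hgE, ?_⟩
        intro f hf hfg x hxg hxf
        by_cases hfe : f = e
        · subst hfe
          exact hiso g hgE hge x hxf hxg
        · exact hgi f (Finset.mem_erase.2 ⟨hfe, hf⟩) hfg x hxg hxf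
      · rintro ⟨hge, hgE, hgi⟩
        exact ⟨⟨hge, hgE⟩, fun f hf hfg x hxg hxf =>
          hgi f (Finset.mem_of_mem_erase hf) hfg x hxg hxf⟩
    have hememk : e ∈ E.filter (IsolEdge E) := Finset.mem_filter.2 ⟨he, hiso⟩
    have hk2 : ((E.erase e).filter (IsolEdge (E.erase e))).card + 1
        = (E.filter (IsolEdge E)).card := by
      rw [hk]; exact Finset.card_erase_add_one hememk
    have hbound := hg.2.2
    omega

lemma good_case4 (E : Finset (Finset V)) (hu : Uniform 2 E)
    (hiso : ∀ e ∈ E, ¬ IsolEdge E e)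
    (u v w : V) (huv : u ≠ v) (hvw : v ≠ w) (huw : u ≠ w)
    (he : ({u, v} : Finset V) ∈ E) (hf : ({v, w} : Finset V) ∈ E)
    (hef : ({u, v} : Finset V) ≠ ({v, w} : Finset V))
    (hdu : hdeg E u = 1) (hdv : hdeg E v = 2) (hdw : hdeg E w = 1)
    (T' : Finset V) (hg : Good ((E.erase {u, v}).erase {v, w}) T') : ∃ T, Good E T := by
  set e : Finset V := {u, v} with he_def
  set f : Finset V := {v, w} with hf_def
  set E' : Finset (Finset V) := (E.erase e).erase f with hE'
  have hE'sub : E' ⊆ E := (Finset.erase_subset _ _).trans (Finset.erase_subset _ _)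
  have hmemE' : ∀ g ∈ E', g ∈ E ∧ g ≠ e ∧ g ≠ f := by
    intro g hg'
    exact ⟨hE'sub hg', (Finset.mem_erase.1 (Finset.mem_of_mem_erase hg')).1,
      (Finset.mem_erase.1 hg').1⟩
  have hue : u ∈ e := by simp [he_def]
  have hve : v ∈ e := by simp [he_def]
  have hvf : v ∈ f := by simp [hf_def]
  have hwf : w ∈ f := by simp [hf_def]
  -- any edge containing u,v, or w is e or f
  have hkey : ∀ g ∈ E', u ∉ g ∧ v ∉ g ∧ w ∉ g := by
    intro g hg'
    obtain ⟨hgE, hge, hgf⟩ := hmemE' g hg'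
    refine ⟨fun h => hge (eq_of_deg_one he hue hdu hgE h), fun h => ?_,
      fun h => hgf (eq_of_deg_one hf hwf hdw hgE h)⟩
    rcases mem_of_deg_two he hf hef hve hvf hdv hgE h with h1 | h1
    · exact hge h1
    · exact hgf h1
  refine ⟨T' ∪ {u, v}, ?_, ?_, ?_⟩
  · intro g hgE
    by_cases hge : g = e
    · exact ⟨u, Finset.mem_union_right _ (by simp), by rw [hge]; exact hue⟩
    by_cases hgf : g = f
    · exact ⟨v, Finset.mem_union_right _ (by simp), by rw [hgf]; exact hvf⟩
    · obtain ⟨x, hx1, hx2⟩ := hg.1 g (Finset.mem_erase.2 ⟨hgf, Finset.mem_erase.2 ⟨hge, hgE⟩⟩)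
      exact ⟨x, Finset.mem_union_left _ hx1, hx2⟩
  · intro x hx
    rcases Finset.mem_union.1 hx with hx | hx
    · obtain ⟨y, hy1, hy2⟩ := hg.2.1 x hx
      exact ⟨y, Finset.mem_union_left _ hy1, hadj_mono hE'sub hy2⟩
    · rcases Finset.mem_insert.1 hx with rfl | hx
      · exact ⟨v, Finset.mem_union_right _ (by simp), huv, e, he, hue, hve⟩
      · rw [Finset.mem_singleton] at hx; subst hx
        exact ⟨u, Finset.mem_union_right _ (by simp), huv.symm, e, he, hve, hue⟩
  · -- cardinalities
    have hT : (T' ∪ {u, v}).card ≤ T'.card + 2 := by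
      refine (Finset.card_union_le _ _).trans ?_
      simp [Finset.card_pair huv]
    have hfE : f ∈ E.erase e := Finset.mem_erase.2 ⟨fun h => hef h.symm, hf⟩
    have hm : E'.card + 2 = E.card := by
      have h1 : E'.card + 1 = (E.erase e).card := Finset.card_erase_add_one hfE
      have h2 : (E.erase e).card + 1 = E.card := Finset.card_erase_add_one he
      omega
    -- support
    have hD : ({u, v, w} : Finset V) ∪ E'.biUnion id ⊆ E.biUnion id := by
      intro x hx
      rcases Finset.mem_union.1 hx with hx | hx
      · rcases Finset.mem_insert.1 hx with rfl | hx
        · exact Finset.mem_biUnion.2 ⟨e, he, hue⟩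
        rcases Finset.mem_insert.1 hx with rfl | hx
        · exact Finset.mem_biUnion.2 ⟨e, he, hve⟩
        · rw [Finset.mem_singleton] at hx; subst hx
          exact Finset.mem_biUnion.2 ⟨f, hf, hwf⟩
      · obtain ⟨g, hgE, hxg⟩ := Finset.mem_biUnion.1 hx
        exact Finset.mem_biUnion.2 ⟨g, hE'sub hgE, hxg⟩
    have hdisj : Disjoint ({u, v, w} : Finset V) (E'.biUnion id) := by
      rw [Finset.disjoint_left]
      intro x hx hx'
      obtain ⟨g, hgE, hxg⟩ := Finset.mem_biUnion.1 hx'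
      obtain ⟨h1, h2, h3⟩ := hkey g hgE
      rcases Finset.mem_insert.1 hx with rfl | hx
      · exact h1 hxg
      rcases Finset.mem_insert.1 hx with rfl | hx
      · exact h2 hxg
      · rw [Finset.mem_singleton] at hx; subst hx; exact h3 hxg
    have hcard3 : ({u, v, w} : Finset V).card = 3 := by
      rw [Finset.card_insert_of_notMem (by simp [huv, huw]),
        Finset.card_pair hvw]
    have hn : 3 + (E'.biUnion id).card ≤ (E.biUnion id).card := by
      have := Finset.card_le_card hD
      rwa [Finset.card_union_of_disjoint hdisj, hcard3] at this
    -- no isolated edges in E'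
    have hk' : E'.filter (IsolEdge E') = ∅ := by
      rw [Finset.filter_eq_empty_iff]
      intro g hg' hgi
      obtain ⟨hgE, hge, hgf⟩ := hmemE' g hg'
      apply hiso g hgE
      intro h hhE hhg x hxg hxh
      by_cases hhe : h = e
      · subst hhe
        obtain ⟨h1, h2, _⟩ := hkey g hg'
        rcases Finset.mem_insert.1 hxh with rfl | hxh
        · exact h1 hxg
        · rw [Finset.mem_singleton] at hxh; subst hxh; exact h2 hxg
      by_cases hhf : h = f
      · subst hhf
        obtain ⟨_, h2, h3⟩ := hkey g hg'
        rcases Finset.mem_insert.1 hxh with rfl | hxh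
        · exact h2 hxg
        · rw [Finset.mem_singleton] at hxh; subst hxh; exact h3 hxg
      · exact hgi h (Finset.mem_erase.2 ⟨hhf, Finset.mem_erase.2 ⟨hhe, hhE⟩⟩) hhg x hxg hxh
    have hbound := hg.2.2
    rw [hk'] at hbound
    have hkE : 0 ≤ (E.filter (IsolEdge E)).card := Nat.zero_le _
    simp only [Finset.card_empty] at hbound
    omega

lemma good_case3 (E : Finset (Finset V)) (hu : Uniform 2 E)
    (hiso : ∀ e ∈ E, ¬ IsolEdge E e)
    (u v : V) (huv : u ≠ v) (he : ({u, v} : Finset V) ∈ E)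
    (hdeg4 : 4 ≤ hdeg E u + hdeg E v)
    (IH : ∀ E₂ : Finset (Finset V), E₂.card < E.card → Uniform 2 E₂ → ∃ T, Good E₂ T) :
    ∃ T, Good E T := by
  classical
  set e0 : Finset V := {u, v} with he0
  have hue : u ∈ e0 := by simp [he0]
  have hve : v ∈ e0 := by simp [he0]
  set E1 : Finset (Finset V) := E.filter (fun g => ¬(u ∈ g ∨ v ∈ g)) with hE1
  set I : Finset (Finset V) := E1.filter (IsolEdge E1) with hI
  set E2 : Finset (Finset V) := E1.filter (fun g => ¬ IsolEdge E1 g) with hE2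
  have hE1sub : E1 ⊆ E := Finset.filter_subset _ _
  have hE2subE1 : E2 ⊆ E1 := Finset.filter_subset _ _
  have hE2sub : E2 ⊆ E := hE2subE1.trans hE1sub
  have hIsubE1 : I ⊆ E1 := Finset.filter_subset _ _
  have hmemE1 : ∀ g ∈ E1, g ∈ E ∧ u ∉ g ∧ v ∉ g := by
    intro g hg
    obtain ⟨h1, h2⟩ := Finset.mem_filter.1 hg
    push_neg at h2
    exact ⟨h1, h2.1, h2.2⟩
  -- E2 is strictly smaller
  have hcard2 : E2.card < E.card := by
    refine Finset.card_lt_card ⟨hE2sub, fun hsub => ?_⟩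
    have : e0 ∈ E2 := hsub he
    exact (hmemE1 e0 (hE2subE1 this)).2.1 hue
  obtain ⟨T2, hT2cov, hT2tot, hT2bound⟩ := IH E2 hcard2 (fun g hg => hu g (hE2sub hg))
  -- no isolated edges in E2
  have hk2 : E2.filter (IsolEdge E2) = ∅ := by
    rw [Finset.filter_eq_empty_iff]
    intro g hg hgi
    have hgE1 : g ∈ E1 := hE2subE1 hg
    have : IsolEdge E1 g := by
      intro f hf hfg x hxg hxf
      by_cases hf2 : IsolEdge E1 f
      · exact hf2 g hgE1 (fun h => hfg h.symm) x hxf hxg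
      · exact hgi f (Finset.mem_filter.2 ⟨hf, hf2⟩) hfg x hxg hxf
    exact (Finset.mem_filter.1 hg).2 this
  rw [hk2] at hT2bound
  simp only [Finset.card_empty, Nat.mul_zero, Nat.add_zero] at hT2bound
  -- choice of connector vertices for isolated edges of E1
  have hpick : ∀ f ∈ I, ∃ x, x ∈ f ∧ ∃ g ∈ E, x ∈ g ∧ (u ∈ g ∨ v ∈ g) := by
    intro f hf
    have hfE1 : f ∈ E1 := hIsubE1 hf
    have hfiso : IsolEdge E1 f := (Finset.mem_filter.1 hf).2
    have hfE : f ∈ E := hE1sub hfE1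
    have := hiso f hfE
    rw [IsolEdge] at this
    push_neg at this
    obtain ⟨g, hgE, hgf, x, hxf, hxg⟩ := this
    by_cases hguv : u ∈ g ∨ v ∈ g
    · exact ⟨x, hxf, g, hgE, hxg, hguv⟩
    · have hgE1 : g ∈ E1 := Finset.mem_filter.2 ⟨hgE, by simpa using hguv⟩
      exact absurd hxg (hfiso g hgE1 hgf x hxf)
  set X : Finset V := I.attach.image (fun f => (hpick f.1 f.2).choose) with hX
  have hXspec : ∀ x ∈ X, (∃ f ∈ I, x ∈ f) ∧ ∃ g ∈ E, x ∈ g ∧ (u ∈ g ∨ v ∈ g) := by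
    intro x hx
    obtain ⟨f, _, rfl⟩ := Finset.mem_image.1 hx
    obtain ⟨h1, h2⟩ := (hpick f.1 f.2).choose_spec
    exact ⟨⟨f.1, f.2, h1⟩, h2⟩
  refine ⟨T2 ∪ {u, v} ∪ X, ?_, ?_, ?_⟩
  · -- cover
    intro g hgE
    by_cases hguv : u ∈ g ∨ v ∈ g
    · rcases hguv with h | h
      · exact ⟨u, Finset.mem_union_left _ (Finset.mem_union_right _ (by simp)), h⟩
      · exact ⟨v, Finset.mem_union_left _ (Finset.mem_union_right _ (by simp)), h⟩
    have hgE1 : g ∈ E1 := Finset.mem_filter.2 ⟨hgE, by simpa using hguv⟩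
    by_cases hgi : IsolEdge E1 g
    · have hgI : g ∈ I := Finset.mem_filter.2 ⟨hgE1, hgi⟩
      refine ⟨(hpick g hgI).choose, Finset.mem_union_right _ ?_, (hpick g hgI).choose_spec.1⟩
      exact Finset.mem_image.2 ⟨⟨g, hgI⟩, Finset.mem_attach _ _, rfl⟩
    · obtain ⟨x, hx1, hx2⟩ := hT2cov g (Finset.mem_filter.2 ⟨hgE1, hgi⟩)
      exact ⟨x, Finset.mem_union_left _ (Finset.mem_union_left _ hx1), hx2⟩
  · -- totality
    intro x hx
    rcases Finset.mem_union.1 hx with hx | hx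
    · rcases Finset.mem_union.1 hx with hx | hx
      · obtain ⟨y, hy1, hy2⟩ := hT2tot x hx
        exact ⟨y, Finset.mem_union_left _ (Finset.mem_union_left _ hy1), hadj_mono hE2sub hy2⟩
      · rcases Finset.mem_insert.1 hx with rfl | hx
        · exact ⟨v, Finset.mem_union_left _ (Finset.mem_union_right _ (by simp)),
            huv, e0, he, hue, hve⟩
        · rw [Finset.mem_singleton] at hx; subst hx
          exact ⟨u, Finset.mem_union_left _ (Finset.mem_union_right _ (by simp)),
            huv.symm, e0, he, hve, hue⟩
    · obtain ⟨⟨f, hfI, hxf⟩, g, hgE, hxg, hguv⟩ := hXspec x hx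
      have hfE1 := hmemE1 f (hIsubE1 hfI)
      rcases hguv with h | h
      · refine ⟨u, Finset.mem_union_left _ (Finset.mem_union_right _ (by simp)),
          fun hh => ?_, g, hgE, hxg, h⟩
        exact hfE1.2.1 (hh ▸ hxf)
      · refine ⟨v, Finset.mem_union_left _ (Finset.mem_union_right _ (by simp)),
          fun hh => ?_, g, hgE, hxg, h⟩
        exact hfE1.2.2 (hh ▸ hxf)
  · -- cardinalities
    have hTcard : (T2 ∪ {u, v} ∪ X).card ≤ T2.card + 2 + I.card := by
      have h1 : X.card ≤ I.card := (Finset.card_image_le).trans (by rw [Finset.card_attach])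
      have h2 := Finset.card_union_le (T2 ∪ {u, v}) X
      have h3 := Finset.card_union_le T2 ({u, v} : Finset V)
      have h4 : ({u, v} : Finset V).card = 2 := Finset.card_pair huv
      omega
    -- edge counts
    have hmE : (E.filter (fun g => u ∈ g ∨ v ∈ g)).card + E1.card = E.card := by
      exact Finset.card_filter_add_card_filter_not _
    have hmE1 : I.card + E2.card = E1.card := by
      exact Finset.card_filter_add_card_filter_not _
    have hF0 : 3 ≤ (E.filter (fun g => u ∈ g ∨ v ∈ g)).card := by
      have hsplit : E.filter (fun g => u ∈ g ∨ v ∈ g)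
          = E.filter (fun g => u ∈ g) ∪ E.filter (fun g => v ∈ g) := Finset.filter_or _ _ _
      have hinter : E.filter (fun g => u ∈ g) ∩ E.filter (fun g => v ∈ g) ⊆ {e0} := by
        intro g hg
        simp only [Finset.mem_inter, Finset.mem_filter] at hg
        have hcg : g.card = 2 := hu g hg.1.1
        have hsub2 : e0 ⊆ g := by
          intro y hy
          rcases Finset.mem_insert.1 hy with rfl | hy
          · exact hg.1.2
          · rw [Finset.mem_singleton] at hy; subst hy; exact hg.2.2
        have : e0 = g := Finset.eq_of_subset_of_card_le hsub2
          (by rw [hcg, he0, Finset.card_pair huv])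
        simp [← this]
      have hiC : (E.filter (fun g => u ∈ g) ∩ E.filter (fun g => v ∈ g)).card ≤ 1 :=
        (Finset.card_le_card hinter).trans (by simp)
      have hcui := Finset.card_union_add_card_inter
        (E.filter (fun g => u ∈ g)) (E.filter (fun g => v ∈ g))
      rw [← hsplit] at hcui
      have : hdeg E u + hdeg E v =
          (E.filter (fun g => u ∈ g)).card + (E.filter (fun g => v ∈ g)).card := rfl
      omega
    -- support counts
    have hIdisj : ∀ f ∈ I, ∀ f' ∈ I, f ≠ f' → Disjoint f f' := by
      intro f hf f' hf' hne
      rw [Finset.disjoint_left]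
      intro x hxf hxf'
      exact (Finset.mem_filter.1 hf).2 f' (hIsubE1 hf') (fun h => hne h.symm) x hxf hxf'
    have hbi : (I.biUnion id).card = 2 * I.card := by
      have hconv : I.biUnion id = I.biUnion (fun x => x) := rfl
      rw [hconv, Finset.card_biUnion hIdisj]
      rw [Finset.sum_congr rfl (fun f hf => hu f (hE1sub (hIsubE1 hf)))]
      simp [Nat.mul_comm]
    have huvnotbi : Disjoint ({u, v} : Finset V) (I.biUnion id) := by
      rw [Finset.disjoint_left]
      intro x hx hx'
      obtain ⟨f, hfI, hxf⟩ := Finset.mem_biUnion.1 hx'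
      have h2 := hmemE1 f (hIsubE1 hfI)
      rcases Finset.mem_insert.1 hx with rfl | hx
      · exact h2.2.1 hxf
      · rw [Finset.mem_singleton] at hx; subst hx; exact h2.2.2 hxf
    have hDcard : (({u, v} : Finset V) ∪ I.biUnion id).card = 2 + 2 * I.card := by
      rw [Finset.card_union_of_disjoint huvnotbi, Finset.card_pair huv, hbi]
    have hDdisj : Disjoint (({u, v} : Finset V) ∪ I.biUnion id) (E2.biUnion id) := by
      rw [Finset.disjoint_left]
      intro x hx hx'
      obtain ⟨g, hgE2, hxg⟩ := Finset.mem_biUnion.1 hx'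
      have hgE1 : g ∈ E1 := hE2subE1 hgE2
      have hg2 := hmemE1 g hgE1
      rcases Finset.mem_union.1 hx with hx | hx
      · rcases Finset.mem_insert.1 hx with rfl | hx
        · exact hg2.2.1 hxg
        · rw [Finset.mem_singleton] at hx; subst hx; exact hg2.2.2 hxg
      · obtain ⟨f, hfI, hxf⟩ := Finset.mem_biUnion.1 hx
        have hfiso : IsolEdge E1 f := (Finset.mem_filter.1 hfI).2
        have hgf : g ≠ f := by
          intro h; subst h
          exact (Finset.mem_filter.1 hgE2).2 hfiso
        exact hfiso g hgE1 hgf x hxf hxg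
    have hDsub : (({u, v} : Finset V) ∪ I.biUnion id) ∪ E2.biUnion id ⊆ E.biUnion id := by
      intro x hx
      rcases Finset.mem_union.1 hx with hx | hx
      · rcases Finset.mem_union.1 hx with hx | hx
        · refine Finset.mem_biUnion.2 ⟨e0, he, ?_⟩
          rcases Finset.mem_insert.1 hx with rfl | hx
          · exact hue
          · rw [Finset.mem_singleton] at hx; subst hx; exact hve
        · obtain ⟨f, hfI, hxf⟩ := Finset.mem_biUnion.1 hx
          exact Finset.mem_biUnion.2 ⟨f, hE1sub (hIsubE1 hfI), hxf⟩
      · obtain ⟨g, hgE2, hxg⟩ := Finset.mem_biUnion.1 hx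
        exact Finset.mem_biUnion.2 ⟨g, hE2sub hgE2, hxg⟩
    have hn : 2 + 2 * I.card + (E2.biUnion id).card ≤ (E.biUnion id).card := by
      have := Finset.card_le_card hDsub
      rwa [Finset.card_union_of_disjoint hDdisj, hDcard] at this
    have hkE : 0 ≤ (E.filter (IsolEdge E)).card := Nat.zero_le _
    omega

lemma good_exists : ∀ (N : ℕ) (E : Finset (Finset V)), E.card ≤ N → Uniform 2 E →
    ∃ T, Good E T := by
  intro N
  induction N with
  | zero =>
    intro E hE _
    have : E = ∅ := Finset.card_eq_zero.1 (Nat.le_zero.1 hE)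
    subst this
    exact ⟨∅, by simp, by simp, by simp [Finset.filter_empty]⟩
  | succ n ih =>
    intro E hE hu
    rcases Finset.eq_empty_or_nonempty E with rfl | ⟨e, heE⟩
    · exact ⟨∅, by simp, by simp, by simp [Finset.filter_empty]⟩
    by_cases hiso : ∃ e ∈ E, IsolEdge E e
    · obtain ⟨e', he', hi'⟩ := hiso
      have hcard : (E.erase e').card ≤ n := by
        have := Finset.card_erase_add_one he'; omega
      obtain ⟨T', hT'⟩ := ih (E.erase e') hcard
        (fun g hg => hu g (Finset.mem_of_mem_erase hg))
      exact good_case1 E hu e' he' hi' T' hT'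
    push_neg at hiso
    have IH : ∀ E₂ : Finset (Finset V), E₂.card < E.card → Uniform 2 E₂ → ∃ T, Good E₂ T := by
      intro E₂ hc hu2
      exact ih E₂ (by omega) hu2
    by_cases hbig : ∃ x y : V, x ≠ y ∧ ({x, y} : Finset V) ∈ E ∧ 4 ≤ hdeg E x + hdeg E y
    · obtain ⟨x, y, hxy, hxyE, hd⟩ := hbig
      exact good_case3 E hu hiso x y hxy hxyE hd IH
    push_neg at hbig
    obtain ⟨a, b, hab, heab⟩ := Finset.card_eq_two.1 (hu e heE)
    have h1 := hiso e heE
    rw [IsolEdge] at h1; push_neg at h1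
    obtain ⟨f, hfE, hfe, c, hce, hcf⟩ := h1
    have hmain : ∀ u' v' : V, u' ≠ v' → ({u', v'} : Finset V) ∈ E →
        ({u', v'} : Finset V) ≠ f → v' ∈ f → ∃ T, Good E T := by
      intro u' v' huv he0 he0f hvf
      have hu'e : u' ∈ ({u', v'} : Finset V) := by simp
      have hv'e : v' ∈ ({u', v'} : Finset V) := by simp
      have hdv2 : 2 ≤ hdeg E v' := by
        have hsub : ({({u', v'} : Finset V), f} : Finset (Finset V))
            ⊆ E.filter (fun g => v' ∈ g) := by
          intro g hg
          rcases Finset.mem_insert.1 hg with rfl | hg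
          · exact Finset.mem_filter.2 ⟨he0, hv'e⟩
          · rw [Finset.mem_singleton] at hg; subst hg
            exact Finset.mem_filter.2 ⟨hfE, hvf⟩
        have := Finset.card_le_card hsub
        rwa [Finset.card_pair he0f] at this
      have hdu1 : 1 ≤ hdeg E u' := by
        have : ({u', v'} : Finset V) ∈ E.filter (fun g => u' ∈ g) :=
          Finset.mem_filter.2 ⟨he0, hu'e⟩
        exact Finset.card_pos.2 ⟨_, this⟩
      have hsum := hbig u' v' huv he0
      have hdu : hdeg E u' = 1 := by omega
      have hdv : hdeg E v' = 2 := by omega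
      obtain ⟨w, hwv, hfw⟩ := pair_of_mem_card_two (hu f hfE) hvf
      have hwE : ({v', w} : Finset V) ∈ E := hfw ▸ hfE
      have hdw1 : 1 ≤ hdeg E w := by
        have : ({v', w} : Finset V) ∈ E.filter (fun g => w ∈ g) :=
          Finset.mem_filter.2 ⟨hwE, by simp⟩
        exact Finset.card_pos.2 ⟨_, this⟩
      have hsum2 := hbig v' w (Ne.symm hwv) hwE
      have hdw : hdeg E w = 1 := by omega
      have huw : u' ≠ w := by
        intro h
        have hu'f : u' ∈ f := by rw [hfw]; simp [h]
        exact he0f (eq_of_deg_one he0 hu'e hdu hfE hu'f).symm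
      have he0f' : ({u', v'} : Finset V) ≠ ({v', w} : Finset V) := hfw ▸ he0f
      have hcard' : ((E.erase {u', v'}).erase {v', w}).card < E.card := by
        have h2 : ({v', w} : Finset V) ∈ E.erase {u', v'} :=
          Finset.mem_erase.2 ⟨Ne.symm he0f', hwE⟩
        have h3 := Finset.card_erase_add_one h2
        have h4 := Finset.card_erase_add_one he0
        omega
      obtain ⟨T', hT'⟩ := IH _ hcard'
        (fun g hg => hu g ((Finset.erase_subset _ _) ((Finset.erase_subset _ _) hg)))
      exact good_case4 E hu hiso u' v' w huv (Ne.symm hwv) huw he0 hwE he0f' hdu hdv hdw T' hT'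
    -- apply hmain in the two symmetric cases
    rcases Finset.mem_insert.1 (heab ▸ hce) with rfl | hcb
    · -- c = a : take u' = b, v' = c
      have hmem : ({b, c} : Finset V) ∈ E := by
        rw [Finset.pair_comm, ← heab]; exact heE
      have hne : ({b, c} : Finset V) ≠ f := by
        intro h
        exact hfe (by rw [← h, Finset.pair_comm, ← heab])
      exact hmain b c (Ne.symm hab) hmem hne hcf
    · rw [Finset.mem_singleton] at hcb; subst hcb
      have hmem : ({a, c} : Finset V) ∈ E := by rw [← heab]; exact heE
      have hne : ({a, c} : Finset V) ≠ f := by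
        intro h
        exact hfe (by rw [← h, ← heab])
      exact hmain a c hab hmem hne hcf

/-- If `H` is a 2-uniform hypergraph with no isolated vertices, no isolated
edges and no multiple edges, then `τ_t(H) ≤ 2(n(H) + m(H))/5`. -/
theorem stmt6 (E : Finset (Finset V)) (hu : Uniform 2 E)
    (hv : ∀ v : V, ∃ e ∈ E, v ∈ e) (he : NoIsolatedEdge E) :
    (taut E : ℝ) ≤ 2 * (Fintype.card V + E.card) / 5 := by
  obtain ⟨T, hcov, htot, hbound⟩ := good_exists E.card E le_rfl hu
  have hk0 : E.filter (IsolEdge E) = ∅ := by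
    rw [Finset.filter_eq_empty_iff]
    intro g hg hgi
    obtain ⟨f, hfE, hfg, x, hxg, hxf⟩ := he g hg
    exact hgi f hfE hfg x hxg hxf
  rw [hk0] at hbound
  simp only [Finset.card_empty, Nat.mul_zero, Nat.add_zero] at hbound
  have hn : (E.biUnion id).card ≤ Fintype.card V := Finset.card_le_univ _
  have htle : taut E ≤ T.card := Nat.sInf_le ⟨T, hcov, htot, rfl⟩
  have hfinal : 5 * taut E ≤ 2 * (Fintype.card V + E.card) := by omega
  rw [le_div_iff₀ (by norm_num : (0:ℝ) < 5)]
  have := (Nat.cast_le (α := ℝ)).2 hfinal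
  push_cast at this ⊢
  linarith
end

section
/- For k ≥ 5, if H is a k-uniform hypergraph with no isolated vertices, no isolated edges and no multiple edges, then 7·τ_t(H) ≤ 2·n(H) + 2·m(H) − n₁(H), where n₁(H) is the number of degree-1 vertices of H. -/
open Finset

attribute [local instance] Classical.propDecidable

variable {V : Type*} [Fintype V] [DecidableEq V]

set_option linter.unusedSectionVars false
set_option maxHeartbeats 1000000

noncomputable def phiP (F : Finset (Finset V)) : ℕ :=
  2 * F.card + ∑ v : V, min (hdeg F v) 2

lemma hdeg_mono {F' F : Finset (Finset V)} (h : F' ⊆ F) (v : V) :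
    hdeg F' v ≤ hdeg F v := card_le_card (filter_subset_filter _ h)

lemma one_le_hdeg {F : Finset (Finset V)} {e : Finset V} {v : V}
    (heF : e ∈ F) (hve : v ∈ e) : 1 ≤ hdeg F v :=
  card_pos.mpr ⟨e, mem_filter.mpr ⟨heF, hve⟩⟩

lemma two_le_hdeg {F : Finset (Finset V)} {e f : Finset V} {v : V}
    (heF : e ∈ F) (hfF : f ∈ F) (hne : e ≠ f) (hve : v ∈ e) (hvf : v ∈ f) :
    2 ≤ hdeg F v := by
  calc 2 = ({e, f} : Finset (Finset V)).card := (card_pair hne).symm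
  _ ≤ hdeg F v := card_le_card (by
      intro x hx
      rcases mem_insert.mp hx with rfl | hx
      · exact mem_filter.mpr ⟨heF, hve⟩
      · rw [mem_singleton.mp hx]; exact mem_filter.mpr ⟨hfF, hvf⟩)

lemma hdeg_eq_zero {F' : Finset (Finset V)} {v : V}
    (h : ∀ f ∈ F', v ∉ f) : hdeg F' v = 0 := by
  unfold hdeg
  rw [card_eq_zero, filter_eq_empty_iff]
  exact h

lemma hdeg_lt {F' F : Finset (Finset V)} {e : Finset V} {v : V}
    (hsub : F' ⊆ F) (heF : e ∈ F) (heF' : e ∉ F') (hve : v ∈ e) :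
    hdeg F' v < hdeg F v := by
  have he' : e ∈ F.filter (fun f => v ∈ f) := mem_filter.mpr ⟨heF, hve⟩
  calc hdeg F' v ≤ ((F.filter (fun f => v ∈ f)).erase e).card := by
        apply card_le_card
        intro x hx
        have hx' := mem_filter.mp hx
        exact mem_erase.mpr ⟨fun h => heF' (h ▸ hx'.1), mem_filter.mpr ⟨hsub hx'.1, hx'.2⟩⟩
  _ < (F.filter (fun f => v ∈ f)).card := card_erase_lt_of_mem he'

lemma hdeg_add_two {F' F : Finset (Finset V)} {e f : Finset V} {v : V}
    (hsub : F' ⊆ F) (heF : e ∈ F) (heF' : e ∉ F') (hfF : f ∈ F) (hfF' : f ∉ F')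
    (hef : e ≠ f) (hve : v ∈ e) (hvf : v ∈ f) :
    hdeg F' v + 2 ≤ hdeg F v := by
  have hf2 : f ∉ F'.filter (fun g => v ∈ g) := fun h => hfF' (mem_filter.mp h).1
  have he2 : e ∉ insert f (F'.filter (fun g => v ∈ g)) := by
    intro h
    rcases mem_insert.mp h with rfl | h
    · exact hef rfl
    · exact heF' (mem_filter.mp h).1
  have hsub2 : insert e (insert f (F'.filter (fun g => v ∈ g))) ⊆ F.filter (fun g => v ∈ g) := by
    intro x hx
    rcases mem_insert.mp hx with rfl | hx
    · exact mem_filter.mpr ⟨heF, hve⟩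
    rcases mem_insert.mp hx with rfl | hx
    · exact mem_filter.mpr ⟨hfF, hvf⟩
    · have := mem_filter.mp hx
      exact mem_filter.mpr ⟨hsub this.1, this.2⟩
  have := card_le_card hsub2
  rw [card_insert_of_notMem he2, card_insert_of_notMem hf2] at this
  unfold hdeg
  omega

lemma phiP_mono {F' F : Finset (Finset V)} (h : F' ⊆ F) : phiP F' ≤ phiP F := by
  unfold phiP
  have h1 : F'.card ≤ F.card := card_le_card h
  have h2 : (∑ v : V, min (hdeg F' v) 2) ≤ ∑ v : V, min (hdeg F v) 2 :=
    Finset.sum_le_sum (fun v _ => by have := hdeg_mono h v; omega)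
  omega


lemma card_le_sdiff_add {α : Type*} [DecidableEq α] (s t : Finset α) :
    s.card ≤ (s \ t).card + t.card := by
  have hsub : s ⊆ (s \ t) ∪ t := by
    intro x hx
    by_cases hxt : x ∈ t
    · exact mem_union.mpr (Or.inr hxt)
    · exact mem_union.mpr (Or.inl (mem_sdiff.mpr ⟨hx, hxt⟩))
  calc s.card ≤ ((s \ t) ∪ t).card := card_le_card hsub
  _ ≤ (s \ t).card + t.card := card_union_le _ _

lemma keyP (F F' : Finset (Finset V)) (hsub : F' ⊆ F)
    (R : Finset (Finset V)) (hRF : R ⊆ F) (hR : ∀ e ∈ R, e ∉ F')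
    (W1 W2 : Finset V) (hW : Disjoint W1 W2)
    (h1 : ∀ w ∈ W1, min (hdeg F' w) 2 + 1 ≤ min (hdeg F w) 2)
    (h2 : ∀ w ∈ W2, min (hdeg F' w) 2 + 2 ≤ min (hdeg F w) 2) :
    phiP F' + 2 * R.card + W1.card + 2 * W2.card ≤ phiP F := by
  have hcard : R.card + F'.card ≤ F.card := by
    have hd : Disjoint R F' := disjoint_left.mpr hR
    calc R.card + F'.card = (R ∪ F').card := (card_union_of_disjoint hd).symm
    _ ≤ F.card := card_le_card (union_subset hRF hsub)
  have hpt : ∀ v : V, min (hdeg F' v) 2 + ((if v ∈ W1 then (1:ℕ) else 0) + (if v ∈ W2 then (2:ℕ) else 0)) ≤ min (hdeg F v) 2 := by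
    intro v
    have hmono := hdeg_mono hsub v
    by_cases hv1 : v ∈ W1
    · have hv2 : v ∉ W2 := fun h => (disjoint_left.mp hW hv1) h
      have := h1 v hv1
      simp only [hv1, hv2, if_true, if_false]
      omega
    · by_cases hv2 : v ∈ W2
      · have := h2 v hv2
        simp only [hv1, hv2, if_true, if_false]
        omega
      · simp only [hv1, hv2, if_false]
        omega
  have hsum : (∑ v : V, min (hdeg F' v) 2) + W1.card + 2 * W2.card ≤ ∑ v : V, min (hdeg F v) 2 := by
    have hle := Finset.sum_le_sum (fun v (_ : v ∈ (univ : Finset V)) => hpt v)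
    rw [Finset.sum_add_distrib, Finset.sum_add_distrib, Finset.sum_ite_mem, Finset.sum_ite_mem,
      univ_inter, univ_inter, Finset.sum_const, Finset.sum_const, smul_eq_mul, smul_eq_mul] at hle
    omega
  unfold phiP
  omega

lemma main_lemma (k : ℕ) (hk : 5 ≤ k) (E : Finset (Finset V)) (hu : Uniform k E)
    (he : NoIsolatedEdge E) :
    ∀ (N : ℕ) (F : Finset (Finset V)) (A : Finset V), F.card ≤ N → F ⊆ E →
      (∀ e ∈ E, e ∉ F → ∃ a ∈ A, a ∈ e) →
      (∀ a ∈ A, ∃ b ∈ A, HAdj E a b) →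
      ∃ T : Finset V, (∀ e ∈ E, ∃ v ∈ T, v ∈ e) ∧ (∀ v ∈ T, ∃ u ∈ T, HAdj E v u) ∧
        7 * T.card ≤ 7 * A.card + phiP F := by
  intro N
  induction N with
  | zero =>
    intro F A hN hFE inv1 inv2
    have hF0 : F = ∅ := card_eq_zero.mp (Nat.le_zero.mp hN)
    subst hF0
    exact ⟨A, fun e heE => inv1 e heE (notMem_empty e), inv2, Nat.le_add_right _ _⟩
  | succ n ih =>
    intro F A hN hFE inv1 inv2
    by_cases hF0 : F = ∅
    · subst hF0
      exact ⟨A, fun e heE => inv1 e heE (notMem_empty e), inv2, Nat.le_add_right _ _⟩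
    -- Case C0 : some uncovered edge already meets A
    by_cases hC0 : ∃ e ∈ F, ∃ a ∈ A, a ∈ e
    · obtain ⟨e, heF, a, haA, hae⟩ := hC0
      have hsub : F.erase e ⊆ F := erase_subset _ _
      have hlt : (F.erase e).card < F.card := card_erase_lt_of_mem heF
      obtain ⟨T, hT1, hT2, hT3⟩ := ih (F.erase e) A (by omega) (hsub.trans hFE)
        (fun e' he' hne' => by
          by_cases h : e' ∈ F
          · have he'e : e' = e := by
              by_contra hc
              exact hne' (mem_erase.mpr ⟨hc, h⟩)
            exact ⟨a, haA, he'e ▸ hae⟩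
          · exact inv1 e' he' h)
        inv2
      have hmono := phiP_mono hsub
      exact ⟨T, hT1, hT2, by omega⟩
    push_neg at hC0
    -- pairstep : generic step adding two adjacent vertices
    have pairstep : ∀ v u : V, v ≠ u → ∀ f, f ∈ F → v ∈ f → u ∈ f →
        (phiP (F.filter fun e => v ∉ e ∧ u ∉ e) + 14 ≤ phiP F) →
        ∃ T : Finset V, (∀ e ∈ E, ∃ x ∈ T, x ∈ e) ∧ (∀ x ∈ T, ∃ y ∈ T, HAdj E x y) ∧
          7 * T.card ≤ 7 * A.card + phiP F := by
      intro v u hvu f hfF hvf huf hkey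
      have hsub : (F.filter fun e => v ∉ e ∧ u ∉ e) ⊆ F := filter_subset _ _
      have hfped : f ∉ (F.filter fun e => v ∉ e ∧ u ∉ e) := by
        intro h
        exact (mem_filter.mp h).2.1 hvf
      have hlt : (F.filter fun e => v ∉ e ∧ u ∉ e).card < F.card :=
        card_lt_card ⟨hsub, fun hall => hfped (hall hfF)⟩
      have hAdjvu : HAdj E v u := ⟨hvu, f, hFE hfF, hvf, huf⟩
      have hAdjuv : HAdj E u v := ⟨hvu.symm, f, hFE hfF, huf, hvf⟩
      obtain ⟨T, hT1, hT2, hT3⟩ := ih (F.filter fun e => v ∉ e ∧ u ∉ e)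
        (insert v (insert u A)) (by omega) (hsub.trans hFE)
        (fun e' he'E he'F' => by
          by_cases h : e' ∈ F
          · have : v ∈ e' ∨ u ∈ e' := by
              by_contra hc
              push_neg at hc
              exact he'F' (mem_filter.mpr ⟨h, hc.1, hc.2⟩)
            rcases this with h' | h'
            · exact ⟨v, mem_insert_self _ _, h'⟩
            · exact ⟨u, mem_insert.mpr (Or.inr (mem_insert_self _ _)), h'⟩
          · obtain ⟨a, ha, hae⟩ := inv1 e' he'E h
            exact ⟨a, mem_insert.mpr (Or.inr (mem_insert.mpr (Or.inr ha))), hae⟩)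
        (fun a ha => by
          rcases mem_insert.mp ha with rfl | ha'
          · exact ⟨u, mem_insert.mpr (Or.inr (mem_insert_self _ _)), hAdjvu⟩
          rcases mem_insert.mp ha' with rfl | ha''
          · exact ⟨v, mem_insert_self _ _, hAdjuv⟩
          · obtain ⟨b, hb, hab⟩ := inv2 a ha''
            exact ⟨b, mem_insert.mpr (Or.inr (mem_insert.mpr (Or.inr hb))), hab⟩)
      refine ⟨T, hT1, hT2, ?_⟩
      have hc1 : (insert v (insert u A)).card ≤ (insert u A).card + 1 := card_insert_le _ _
      have hc2 : (insert u A).card ≤ A.card + 1 := card_insert_le _ _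
      omega
    -- Case C1 : isolated edge within F
    by_cases hC1 : ∃ e ∈ F, ∀ f ∈ F, f ≠ e → ∀ w ∈ e, w ∉ f
    · obtain ⟨e, heF, hiso⟩ := hC1
      obtain ⟨g, hgE, hge, w, hwe, hwg⟩ := he e (hFE heF)
      have hgF : g ∉ F := fun hgF => hiso g hgF hge w hwe hwg
      obtain ⟨a, haA, hag⟩ := inv1 g hgE hgF
      have hwA : w ∉ A := fun hwA => hC0 e heF w hwA hwe
      have hwa : w ≠ a := fun h => hwA (h ▸ haA)
      have hsub : (F.filter fun e' => w ∉ e') ⊆ F := filter_subset _ _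
      have heF' : e ∉ (F.filter fun e' => w ∉ e') := fun h => (mem_filter.mp h).2 hwe
      have hlt : (F.filter fun e' => w ∉ e').card < F.card :=
        card_lt_card ⟨hsub, fun hall => heF' (hall heF)⟩
      have hkey : phiP (F.filter fun e' => w ∉ e') + 7 ≤ phiP F := by
        have h1 : ∀ x ∈ e, min (hdeg (F.filter fun e' => w ∉ e') x) 2 + 1 ≤ min (hdeg F x) 2 := by
          intro x hxe
          have hd1 : 1 ≤ hdeg F x := one_le_hdeg heF hxe
          have hd0 : hdeg (F.filter fun e' => w ∉ e') x = 0 := by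
            apply hdeg_eq_zero
            intro f hf hxf
            have hf' := mem_filter.mp hf
            have hfe : f ≠ e := fun h => hf'.2 (h ▸ hwe)
            exact hiso f hf'.1 hfe x hxe hxf
          omega
        have hkk := keyP F (F.filter fun e' => w ∉ e') hsub {e}
          (singleton_subset_iff.mpr heF) (by simpa using heF')
          e ∅ (disjoint_empty_right _) h1 (by simp)
        have hce : e.card = k := hu e (hFE heF)
        simp only [card_singleton, card_empty] at hkk
        omega
      obtain ⟨T, hT1, hT2, hT3⟩ := ih (F.filter fun e' => w ∉ e') (insert w A)
        (by omega) (hsub.trans hFE)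
        (fun e' he'E he'F' => by
          by_cases h : e' ∈ F
          · have hwe' : w ∈ e' := by
              by_contra hc
              exact he'F' (mem_filter.mpr ⟨h, hc⟩)
            exact ⟨w, mem_insert_self _ _, hwe'⟩
          · obtain ⟨a', ha', hae'⟩ := inv1 e' he'E h
            exact ⟨a', mem_insert.mpr (Or.inr ha'), hae'⟩)
        (fun a' ha' => by
          rcases mem_insert.mp ha' with rfl | ha''
          · exact ⟨a, mem_insert.mpr (Or.inr haA), ⟨hwa, g, hgE, hwg, hag⟩⟩
          · obtain ⟨b, hb, hab⟩ := inv2 a' ha''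
            exact ⟨b, mem_insert.mpr (Or.inr hb), hab⟩)
      refine ⟨T, hT1, hT2, ?_⟩
      have hc1 : (insert w A).card ≤ A.card + 1 := card_insert_le _ _
      omega
    push_neg at hC1
    -- Case C2 : every edge meets another edge; pick a max-degree vertex v
    obtain ⟨e0, he0F⟩ := nonempty_iff_ne_empty.mpr hF0
    obtain ⟨f0, hf0F, hf0ne, w0, hw0e, hw0f⟩ := hC1 e0 he0F
    obtain ⟨v, -, hmax⟩ := (univ : Finset V).exists_max_image (hdeg F) ⟨w0, mem_univ _⟩
    have hmax' : ∀ x : V, hdeg F x ≤ hdeg F v := fun x => hmax x (mem_univ _)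
    have hv2 : 2 ≤ hdeg F v :=
      le_trans (two_le_hdeg he0F hf0F hf0ne.symm hw0e hw0f) (hmax' w0)
    by_cases hdom : ∀ f ∈ F, v ∈ f → ∀ x ∈ f, ∀ g ∈ F, x ∈ g → v ∈ g
    · -- Case D : v dominant
      have h2c : 1 < (F.filter (fun e => v ∈ e)).card := hv2
      obtain ⟨e1, he1, e2, he2, hne12⟩ := one_lt_card.mp h2c
      have he1F : e1 ∈ F := (mem_filter.mp he1).1
      have hve1 : v ∈ e1 := (mem_filter.mp he1).2
      have he2F : e2 ∈ F := (mem_filter.mp he2).1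
      have hve2 : v ∈ e2 := (mem_filter.mp he2).2
      have hkE1 : e1.card = k := hu e1 (hFE he1F)
      have hkE2 : e2.card = k := hu e2 (hFE he2F)
      have hune : (e1.erase v).Nonempty := by
        rw [← card_pos, card_erase_of_mem hve1, hkE1]; omega
      obtain ⟨u, hu'⟩ := hune
      have huv : u ≠ v := (mem_erase.mp hu').1
      have hue1 : u ∈ e1 := (mem_erase.mp hu').2
      apply pairstep v u huv.symm e1 he1F hve1 hue1
      set F' := F.filter (fun e => v ∉ e ∧ u ∉ e) with hF'def
      have hsub : F' ⊆ F := filter_subset _ _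
      have hzero : ∀ x ∈ e1 ∪ e2, hdeg F' x = 0 := by
        intro x hx
        apply hdeg_eq_zero
        intro f hf hxf
        have hf' := mem_filter.mp hf
        rcases mem_union.mp hx with hx1 | hx2
        · exact hf'.2.1 (hdom e1 he1F hve1 x hx1 f hf'.1 hxf)
        · exact hf'.2.1 (hdom e2 he2F hve2 x hx2 f hf'.1 hxf)
      have h2 : ∀ x ∈ e1 ∩ e2, min (hdeg F' x) 2 + 2 ≤ min (hdeg F x) 2 := by
        intro x hx
        have := two_le_hdeg he1F he2F hne12 (mem_inter.mp hx).1 (mem_inter.mp hx).2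
        have := hzero x (mem_union.mpr (Or.inl (mem_inter.mp hx).1))
        omega
      have h1 : ∀ x ∈ (e1 ∪ e2) \ (e1 ∩ e2), min (hdeg F' x) 2 + 1 ≤ min (hdeg F x) 2 := by
        intro x hx
        have hx' := (mem_sdiff.mp hx).1
        have hd1 : 1 ≤ hdeg F x := by
          rcases mem_union.mp hx' with h | h
          · exact one_le_hdeg he1F h
          · exact one_le_hdeg he2F h
        have := hzero x hx'
        omega
      have hRne : ∀ x ∈ ({e1, e2} : Finset (Finset V)), x ∉ F' := by
        intro x hx h
        rcases mem_insert.mp hx with rfl | hx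
        · exact (mem_filter.mp h).2.1 hve1
        · rw [mem_singleton.mp hx] at h
          exact (mem_filter.mp h).2.1 hve2
      have hRsub : ({e1, e2} : Finset (Finset V)) ⊆ F := by
        intro x hx
        rcases mem_insert.mp hx with rfl | hx
        · exact he1F
        · rw [mem_singleton.mp hx]; exact he2F
      have hkk := keyP F F' hsub {e1, e2} hRsub hRne
        ((e1 ∪ e2) \ (e1 ∩ e2)) (e1 ∩ e2) sdiff_disjoint h1 h2
      have hRc : ({e1, e2} : Finset (Finset V)).card = 2 := card_pair hne12
      have hcui : (e1 ∪ e2).card + (e1 ∩ e2).card = k + k := by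
        rw [card_union_add_card_inter, hkE1, hkE2]
      have hIsub : e1 ∩ e2 ⊆ e1 ∪ e2 := (inter_subset_left).trans subset_union_left
      have hsd : ((e1 ∪ e2) \ (e1 ∩ e2)).card = (e1 ∪ e2).card - (e1 ∩ e2).card :=
        card_sdiff_of_subset hIsub
      have hIle : (e1 ∩ e2).card ≤ (e1 ∪ e2).card := card_le_card hIsub
      omega
    · -- v not dominant : get u in a common edge h with outside edge g
      push_neg at hdom
      obtain ⟨h, hhF, hvh, u, huh, g, hgF, hug, hvg⟩ := hdom
      have hvu : v ≠ u := fun h' => hvg (h' ▸ hug)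
      have hhg : h ≠ g := fun h' => hvg (h' ▸ hvh)
      have hu2 : 2 ≤ hdeg F u := two_le_hdeg hhF hgF hhg huh hug
      have hkh : h.card = k := hu h (hFE hhF)
      have hkg : g.card = k := hu g (hFE hgF)
      -- common small facts about F' for S = {v,u}
      have hW2 : ∀ (u' : V), 2 ≤ hdeg F u' →
          ∀ x ∈ ({v, u'} : Finset V), min (hdeg (F.filter fun e => v ∉ e ∧ u' ∉ e) x) 2 + 2
            ≤ min (hdeg F x) 2 := by
        intro u' hu2' x hx
        have hd0 : hdeg (F.filter fun e => v ∉ e ∧ u' ∉ e) x = 0 := by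
          apply hdeg_eq_zero
          intro f hf hxf
          have hf' := mem_filter.mp hf
          rcases mem_insert.mp hx with rfl | hx2
          · exact hf'.2.1 hxf
          · exact hf'.2.2 ((mem_singleton.mp hx2) ▸ hxf)
        have hd2 : 2 ≤ hdeg F x := by
          rcases mem_insert.mp hx with rfl | hx2
          · exact hv2
          · rw [mem_singleton.mp hx2]; exact hu2'
        omega
      by_cases ha4 : 4 ≤ hdeg F v
      · -- Case N1
        apply pairstep v u hvu h hhF hvh huh
        set F' := F.filter (fun e => v ∉ e ∧ u ∉ e) with hF'def
        have hsub : F' ⊆ F := filter_subset _ _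
        have hR : ∀ x ∈ insert g (F.filter (fun e => v ∈ e)), x ∉ F' := by
          intro x hx hxF'
          have hx' := mem_filter.mp hxF'
          rcases mem_insert.mp hx with rfl | hx
          · exact hx'.2.2 hug
          · exact hx'.2.1 (mem_filter.mp hx).2
        have hRsub : insert g (F.filter (fun e => v ∈ e)) ⊆ F := by
          intro x hx
          rcases mem_insert.mp hx with rfl | hx
          · exact hgF
          · exact (mem_filter.mp hx).1
        have hkk := keyP F F' hsub _ hRsub hR ∅ {v, u} (disjoint_empty_left _)
          (by simp) (hW2 u hu2)
        have hgni : g ∉ F.filter (fun e => v ∈ e) := fun hh => hvg (mem_filter.mp hh).2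
        have hRc : (insert g (F.filter (fun e => v ∈ e))).card = hdeg F v + 1 := by
          rw [card_insert_of_notMem hgni]; unfold hdeg; omega
        have hc2 : ({v, u} : Finset V).card = 2 := card_pair hvu
        simp only [card_empty] at hkk
        omega
      by_cases ha3 : hdeg F v = 3
      · -- max degree = 3
        by_cases hN3a : ∃ f' ∈ F, v ∈ f' ∧ ∃ u' ∈ f', ∃ g1 ∈ F, ∃ g2 ∈ F,
            g1 ≠ g2 ∧ u' ∈ g1 ∧ u' ∈ g2 ∧ v ∉ g1 ∧ v ∉ g2
        · -- Case N3a
          obtain ⟨f', hf'F, hvf', u', hu'f', g1, hg1F, g2, hg2F, hg12, hu'g1, hu'g2, hvg1, hvg2⟩ := hN3a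
          have hvu' : v ≠ u' := fun h' => hvg1 (h' ▸ hu'g1)
          have hu'2 : 2 ≤ hdeg F u' := two_le_hdeg hg1F hg2F hg12 hu'g1 hu'g2
          apply pairstep v u' hvu' f' hf'F hvf' hu'f'
          set F' := F.filter (fun e => v ∉ e ∧ u' ∉ e) with hF'def
          have hsub : F' ⊆ F := filter_subset _ _
          have hR : ∀ x ∈ insert g1 (insert g2 (F.filter (fun e => v ∈ e))), x ∉ F' := by
            intro x hx hxF'
            have hx' := mem_filter.mp hxF'
            rcases mem_insert.mp hx with rfl | hx
            · exact hx'.2.2 hu'g1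
            rcases mem_insert.mp hx with rfl | hx
            · exact hx'.2.2 hu'g2
            · exact hx'.2.1 (mem_filter.mp hx).2
          have hRsub : insert g1 (insert g2 (F.filter (fun e => v ∈ e))) ⊆ F := by
            intro x hx
            rcases mem_insert.mp hx with rfl | hx
            · exact hg1F
            rcases mem_insert.mp hx with rfl | hx
            · exact hg2F
            · exact (mem_filter.mp hx).1
          have hkk := keyP F F' hsub _ hRsub hR ∅ {v, u'} (disjoint_empty_left _)
            (by simp) (hW2 u' hu'2)
          have hg2ni : g2 ∉ F.filter (fun e => v ∈ e) := fun hh => hvg2 (mem_filter.mp hh).2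
          have hg1ni : g1 ∉ insert g2 (F.filter (fun e => v ∈ e)) := by
            intro hh
            rcases mem_insert.mp hh with rfl | hh
            · exact hg12 rfl
            · exact hvg1 (mem_filter.mp hh).2
          have hRc : (insert g1 (insert g2 (F.filter (fun e => v ∈ e)))).card = hdeg F v + 2 := by
            rw [card_insert_of_notMem hg1ni, card_insert_of_notMem hg2ni]; unfold hdeg; omega
          have hc2 : ({v, u'} : Finset V).card = 2 := card_pair hvu'
          simp only [card_empty] at hkk
          omega
        · -- Case N3b
          apply pairstep v u hvu h hhF hvh huh
          set F' := F.filter (fun e => v ∉ e ∧ u ∉ e) with hF'def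
          have hsub : F' ⊆ F := filter_subset _ _
          have hhnF' : h ∉ F' := fun hh => (mem_filter.mp hh).2.1 hvh
          have h1 : ∀ x ∈ h \ {v, u}, min (hdeg F' x) 2 + 1 ≤ min (hdeg F x) 2 := by
            intro x hx
            have hxh : x ∈ h := (mem_sdiff.mp hx).1
            have hlt' : hdeg F' x < hdeg F x := hdeg_lt hsub hhF hhnF' hxh
            by_cases hex : ∃ f2 ∈ F, x ∈ f2 ∧ v ∈ f2 ∧ f2 ≠ h
            · obtain ⟨f2, hf2F, hxf2, hvf2, hf2h⟩ := hex
              have hf2nF' : f2 ∉ F' := fun hh => (mem_filter.mp hh).2.1 hvf2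
              have hd2 : hdeg F' x + 2 ≤ hdeg F x :=
                hdeg_add_two hsub hf2F hf2nF' hhF hhnF' hf2h hxf2 hxh
              have hd3 : hdeg F x ≤ 3 := by rw [← ha3]; exact hmax' x
              omega
            · push_neg at hex
              have hsub2 : F.filter (fun e => x ∈ e) ⊆
                  insert h (F.filter (fun e2 => x ∈ e2 ∧ v ∉ e2)) := by
                intro f2 hf2
                have hf2' := mem_filter.mp hf2
                by_cases hvf2 : v ∈ f2
                · have : f2 = h := by
                    by_contra hc
                    exact hc (hex f2 hf2'.1 hf2'.2 hvf2)
                  rw [this]; exact mem_insert_self _ _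
                · exact mem_insert.mpr (Or.inr (mem_filter.mpr ⟨hf2'.1, hf2'.2, hvf2⟩))
              have hcone : (F.filter (fun e2 => x ∈ e2 ∧ v ∉ e2)).card ≤ 1 := by
                rw [card_le_one]
                intro g1 hg1 g2 hg2
                by_contra hc
                have hg1' := mem_filter.mp hg1
                have hg2' := mem_filter.mp hg2
                exact hN3a ⟨h, hhF, hvh, x, hxh, g1, hg1'.1, g2, hg2'.1, hc,
                  hg1'.2.1, hg2'.2.1, hg1'.2.2, hg2'.2.2⟩
              have hd2 : hdeg F x ≤ 2 := by
                have := card_le_card hsub2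
                have := card_insert_le h (F.filter (fun e2 => x ∈ e2 ∧ v ∉ e2))
                unfold hdeg
                omega
              omega
          have hR : ∀ x ∈ insert g (F.filter (fun e => v ∈ e)), x ∉ F' := by
            intro x hx hxF'
            have hx' := mem_filter.mp hxF'
            rcases mem_insert.mp hx with rfl | hx
            · exact hx'.2.2 hug
            · exact hx'.2.1 (mem_filter.mp hx).2
          have hRsub : insert g (F.filter (fun e => v ∈ e)) ⊆ F := by
            intro x hx
            rcases mem_insert.mp hx with rfl | hx
            · exact hgF
            · exact (mem_filter.mp hx).1
          have hkk := keyP F F' hsub _ hRsub hR (h \ {v, u}) {v, u} sdiff_disjoint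
            h1 (hW2 u hu2)
          have hgni : g ∉ F.filter (fun e => v ∈ e) := fun hh => hvg (mem_filter.mp hh).2
          have hRc : (insert g (F.filter (fun e => v ∈ e))).card = hdeg F v + 1 := by
            rw [card_insert_of_notMem hgni]; unfold hdeg; omega
          have hc2 : ({v, u} : Finset V).card = 2 := card_pair hvu
          have hW1c : k ≤ (h \ {v, u}).card + 2 := by
            have h1' := card_le_sdiff_add h ({v, u} : Finset V)
            omega
          omega
      · -- Case N2 : hdeg F v = 2
        have ha2 : hdeg F v = 2 := by omega
        have hfil2 : (F.filter (fun e => v ∈ e)).card = 2 := ha2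
        have hh' : h ∈ F.filter (fun e => v ∈ e) := mem_filter.mpr ⟨hhF, hvh⟩
        have hene : ((F.filter (fun e => v ∈ e)).erase h).Nonempty := by
          rw [← card_pos, card_erase_of_mem hh', hfil2]
          omega
        obtain ⟨e', he''⟩ := hene
        have he'h : e' ≠ h := (mem_erase.mp he'').1
        have he'F : e' ∈ F := (mem_filter.mp (mem_erase.mp he'').2).1
        have hve' : v ∈ e' := (mem_filter.mp (mem_erase.mp he'').2).2
        apply pairstep v u hvu h hhF hvh huh
        set F' := F.filter (fun e => v ∉ e ∧ u ∉ e) with hF'def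
        have hsub : F' ⊆ F := filter_subset _ _
        have hhnF' : h ∉ F' := fun hh => (mem_filter.mp hh).2.1 hvh
        have hgnF' : g ∉ F' := fun hh => (mem_filter.mp hh).2.2 hug
        have he'nF' : e' ∉ F' := fun hh => (mem_filter.mp hh).2.1 hve'
        have h1 : ∀ x ∈ (h ∪ g) \ {v, u}, min (hdeg F' x) 2 + 1 ≤ min (hdeg F x) 2 := by
          intro x hx
          have hxhg : x ∈ h ∪ g := (mem_sdiff.mp hx).1
          have hlt' : hdeg F' x < hdeg F x := by
            rcases mem_union.mp hxhg with hxh | hxg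
            · exact hdeg_lt hsub hhF hhnF' hxh
            · exact hdeg_lt hsub hgF hgnF' hxg
          have hd2 : hdeg F x ≤ 2 := by rw [← ha2]; exact hmax' x
          omega
        have hR : ∀ x ∈ ({h, e', g} : Finset (Finset V)), x ∉ F' := by
          intro x hx
          rcases mem_insert.mp hx with rfl | hx
          · exact hhnF'
          rcases mem_insert.mp hx with rfl | hx
          · exact he'nF'
          · rw [mem_singleton.mp hx]; exact hgnF'
        have hRsub : ({h, e', g} : Finset (Finset V)) ⊆ F := by
          intro x hx
          rcases mem_insert.mp hx with rfl | hx
          · exact hhF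
          rcases mem_insert.mp hx with rfl | hx
          · exact he'F
          · rw [mem_singleton.mp hx]; exact hgF
        have hkk := keyP F F' hsub _ hRsub hR ((h ∪ g) \ {v, u}) {v, u} sdiff_disjoint
          h1 (hW2 u hu2)
        have he'g : e' ≠ g := fun h' => hvg (h' ▸ hve')
        have hRc : ({h, e', g} : Finset (Finset V)).card = 3 := by
          rw [card_insert_of_notMem, card_insert_of_notMem, card_singleton]
          · intro hh; exact he'g (mem_singleton.mp hh)
          · intro hh
            rcases mem_insert.mp hh with h' | h'
            · exact he'h h'.symm
            · exact hhg (mem_singleton.mp h')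
        have hc2 : ({v, u} : Finset V).card = 2 := card_pair hvu
        -- |h ∪ g| ≥ k + 1
        have hInt : h ∩ g ⊆ h.erase v := by
          intro x hx
          have hx' := mem_inter.mp hx
          exact mem_erase.mpr ⟨fun h' => hvg (h' ▸ hx'.2), hx'.1⟩
        have hIle : (h ∩ g).card ≤ k - 1 := by
          have := card_le_card hInt
          rw [card_erase_of_mem hvh, hkh] at this
          exact this
        have hcui : (h ∪ g).card + (h ∩ g).card = k + k := by
          rw [card_union_add_card_inter, hkh, hkg]
        have hW1c : (h ∪ g).card ≤ ((h ∪ g) \ {v, u}).card + 2 := by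
          have h1' := card_le_sdiff_add (h ∪ g) ({v, u} : Finset V)
          omega
        omega


/-- For `k ≥ 5`, if `H` is a `k`-uniform hypergraph with no isolated vertices,
no isolated edges and no multiple edges, then
`7·τ_t(H) ≤ 2·n(H) + 2·m(H) − n₁(H)`. -/
theorem stmt9 (k : ℕ) (hk : 5 ≤ k) (E : Finset (Finset V)) (hu : Uniform k E)
    (hv : ∀ v : V, ∃ e ∈ E, v ∈ e) (he : NoIsolatedEdge E) :
    7 * taut E ≤ 2 * Fintype.card V + 2 * E.card - n1 E := by
  unfold taut n1
  obtain ⟨T, hT1, hT2, hT3⟩ := main_lemma k hk E hu he E.card E ∅ le_rfl Subset.rfl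
    (fun e heE heF => absurd heE heF) (fun a ha => absurd ha (notMem_empty a))
  have htaut : sInf {n | ∃ T : Finset V, (∀ e ∈ E, ∃ v ∈ T, v ∈ e) ∧
      (∀ v ∈ T, ∃ u ∈ T, HAdj E v u) ∧ T.card = n} ≤ T.card :=
    Nat.sInf_le ⟨T, hT1, hT2, rfl⟩
  have hsum : (∑ v : V, min (hdeg E v) 2) + (univ.filter (fun v => hdeg E v = 1)).card
      = 2 * Fintype.card V := by
    have hpt : ∀ v : V, min (hdeg E v) 2 + (if hdeg E v = 1 then 1 else 0) = 2 := by
      intro v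
      obtain ⟨e, heE, hve⟩ := hv v
      have h1 : 1 ≤ hdeg E v := one_le_hdeg heE hve
      by_cases h : hdeg E v = 1 <;> simp [h] <;> omega
    have hall : ∑ v : V, (min (hdeg E v) 2 + (if hdeg E v = 1 then 1 else 0))
        = 2 * Fintype.card V := by
      rw [Finset.sum_congr rfl (fun v (_ : v ∈ univ) => hpt v), Finset.sum_const,
        smul_eq_mul, card_univ, mul_comm]
    rw [Finset.sum_add_distrib] at hall
    have hfil : ∑ v : V, (if hdeg E v = 1 then (1:ℕ) else 0)
        = (univ.filter (fun v => hdeg E v = 1)).card := by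
      rw [← Finset.sum_filter]
      simp
    omega
  have hn1 : (univ.filter (fun v => hdeg E v = 1)).card ≤ Fintype.card V := by
    have := card_filter_le (univ : Finset V) (fun v => hdeg E v = 1)
    simpa [card_univ] using this
  have hphi : phiP E = 2 * E.card + ∑ v : V, min (hdeg E v) 2 := rfl
  simp only [card_empty, Nat.mul_zero, Nat.zero_add] at hT3
  omega
end

section
/- For every constant c > 1 and every k-uniform hypergraph H (with k ≥ 2), the strong transversal number satisfies τ₂(H) ≤ ((ln k + ln c)/(k−1))·n(H) + ((ln k + ln c)/(c(k−1)))·m(H) + (2/(ck))·m(H). -/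
open Finset

attribute [local instance] Classical.propDecidable

variable {V : Type*} [Fintype V] [DecidableEq V]

lemma sum_prod_bool (f : V → Bool → ℝ) :
    ∑ σ : V → Bool, ∏ v, f v (σ v) = ∏ v, (f v true + f v false) := by
  rw [← Fintype.piFinset_univ, ← Finset.prod_univ_sum]
  simp [Fintype.sum_bool, add_comm]

lemma exp_ind (p q : ℝ) (hpq : p + q = 1) (s t : Finset V) (hst : Disjoint s t) :
    ∑ σ : V → Bool, (∏ v, (if σ v then p else q)) *
      ((∏ v ∈ s, (if σ v then (0:ℝ) else 1)) * ∏ v ∈ t, (if σ v then (1:ℝ) else 0))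
      = q ^ s.card * p ^ t.card := by
  have key : ∀ σ : V → Bool, (∏ v, (if σ v then p else q)) *
      ((∏ v ∈ s, (if σ v then (0:ℝ) else 1)) * ∏ v ∈ t, (if σ v then (1:ℝ) else 0))
      = ∏ v, ((if σ v then p else q) *
          ((if v ∈ s then (if σ v then (0:ℝ) else 1) else 1) *
           (if v ∈ t then (if σ v then (1:ℝ) else 0) else 1))) := by
    intro σ
    rw [Finset.prod_mul_distrib, Finset.prod_mul_distrib]
    congr 1
    congr 1
    · rw [Finset.prod_ite_mem, Finset.univ_inter]
    · rw [Finset.prod_ite_mem, Finset.univ_inter]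
  simp only [key]
  rw [sum_prod_bool (fun v b => (if b then p else q) *
      ((if v ∈ s then (if b then (0:ℝ) else 1) else 1) *
       (if v ∈ t then (if b then (1:ℝ) else 0) else 1)))]
  have point : ∀ v : V, ((if (true:Bool) then p else q) *
          ((if v ∈ s then (if (true:Bool) then (0:ℝ) else 1) else 1) *
           (if v ∈ t then (if (true:Bool) then (1:ℝ) else 0) else 1))) +
        ((if (false:Bool) then p else q) *
          ((if v ∈ s then (if (false:Bool) then (0:ℝ) else 1) else 1) *
           (if v ∈ t then (if (false:Bool) then (1:ℝ) else 0) else 1)))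
      = (if v ∈ s then q else 1) * (if v ∈ t then p else 1) := by
    intro v
    by_cases hs : v ∈ s <;> by_cases ht : v ∈ t <;>
      simp [hs, ht, hpq]
    exact absurd (Finset.disjoint_left.mp hst hs) (by simp [ht])
  calc ∏ v, _ = ∏ v : V, ((if v ∈ s then q else 1) * (if v ∈ t then p else 1)) :=
        Finset.prod_congr rfl (fun v _ => point v)
    _ = q ^ s.card * p ^ t.card := by
        rw [Finset.prod_mul_distrib, Finset.prod_ite_mem, Finset.prod_ite_mem,
          Finset.univ_inter, Finset.univ_inter, Finset.prod_const, Finset.prod_const]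

lemma lemA (k : ℕ) (hk : 2 ≤ k) (E : Finset (Finset V)) (hu : Uniform k E) (S : Finset V) :
    tau2 E ≤ S.card + ∑ e ∈ E, (2 - (e ∩ S).card) := by
  have hex : ∀ e : Finset V, ∃ t, t ⊆ e \ S ∧ (e ∈ E → t.card = 2 - (e ∩ S).card) := by
    intro e
    by_cases he : e ∈ E
    · have h1 : (e ∩ S).card + (e \ S).card = e.card := Finset.card_inter_add_card_sdiff e S
      have h2 : 2 - (e ∩ S).card ≤ (e \ S).card := by
        have := hu e he; omega
      obtain ⟨t, ht, htc⟩ := Finset.exists_subset_card_eq h2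
      exact ⟨t, ht, fun _ => htc⟩
    · exact ⟨∅, Finset.empty_subset _, fun h => absurd h he⟩
  choose f hf1 hf2 using hex
  set T : Finset V := S ∪ E.biUnion f with hT
  have hcov : ∀ e ∈ E, 2 ≤ (e ∩ T).card := by
    intro e he
    have hsub : (e ∩ S) ∪ f e ⊆ e ∩ T := by
      intro x hx
      rcases Finset.mem_union.mp hx with h | h
      · exact Finset.mem_inter.mpr ⟨(Finset.mem_inter.mp h).1,
          Finset.mem_union_left _ (Finset.mem_inter.mp h).2⟩
      · have hx2 := hf1 e h
        exact Finset.mem_inter.mpr ⟨(Finset.mem_sdiff.mp hx2).1,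
          Finset.mem_union_right _ (Finset.mem_biUnion.mpr ⟨e, he, h⟩)⟩
    have hdisj : Disjoint (e ∩ S) (f e) := by
      refine Finset.disjoint_left.mpr fun x hx hx2 => ?_
      exact (Finset.mem_sdiff.mp (hf1 e hx2)).2 (Finset.mem_inter.mp hx).2
    have hcard : ((e ∩ S) ∪ f e).card = (e ∩ S).card + (f e).card :=
      Finset.card_union_of_disjoint hdisj
    have := Finset.card_le_card hsub
    rw [hcard, hf2 e he] at this
    omega
  have hTcard : T.card ≤ S.card + ∑ e ∈ E, (2 - (e ∩ S).card) := by
    calc T.card ≤ S.card + (E.biUnion f).card := Finset.card_union_le _ _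
      _ ≤ S.card + ∑ e ∈ E, (f e).card := by
          exact Nat.add_le_add_left (Finset.card_biUnion_le) _
      _ = S.card + ∑ e ∈ E, (2 - (e ∩ S).card) := by
          congr 1; exact Finset.sum_congr rfl fun e he => hf2 e he
  exact le_trans (Nat.sInf_le ⟨T, hcov, rfl⟩) hTcard

lemma i0 (σ : V → Bool) (e : Finset V) :
    ∏ v ∈ e, (if σ v then (0:ℝ) else 1) = 0 ^ (e.filter (fun v => σ v = true)).card := by
  rw [Finset.prod_ite]
  simp [Finset.prod_const]

lemma point_id (a : ℕ) : ((2 - a : ℕ) : ℝ) = 2 * 0 ^ a + (a : ℝ) * 0 ^ (a - 1) := by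
  match a with
  | 0 => norm_num
  | 1 => norm_num
  | (n+2) => simp [pow_succ]

lemma decomp (σ : V → Bool) (e : Finset V) :
    ((2 - (e.filter (fun v => σ v = true)).card : ℕ) : ℝ)
      = 2 * ∏ v ∈ e, (if σ v then (0:ℝ) else 1)
        + ∑ u ∈ e, (∏ v ∈ e.erase u, (if σ v then (0:ℝ) else 1)) * (if σ u then 1 else 0) := by
  rw [point_id, i0]
  congr 1
  have hterm : ∀ u ∈ e, (∏ v ∈ e.erase u, (if σ v then (0:ℝ) else 1)) * (if σ u then 1 else 0)
      = if σ u = true then (0:ℝ) ^ (((e.filter (fun v => σ v = true)).erase u).card) else 0 := by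
    intro u _
    rw [i0, Finset.filter_erase]
    by_cases h : σ u = true <;> simp [h]
  rw [Finset.sum_congr rfl hterm, ← Finset.sum_filter]
  set A := e.filter (fun v => σ v = true) with hA
  have hAe : A ⊆ e := Finset.filter_subset _ _
  have : ∀ u ∈ A, (0:ℝ) ^ ((A.erase u).card) = 0 ^ (A.card - 1) := by
    intro u hu; rw [Finset.card_erase_of_mem hu]
  rw [Finset.sum_congr rfl this, Finset.sum_const, nsmul_eq_mul]

lemma exp_edge (p q : ℝ) (hpq : p + q = 1) (e : Finset V) :
    ∑ σ : V → Bool, (∏ v, (if σ v then p else q)) *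
        ((2 - (e.filter (fun v => σ v = true)).card : ℕ) : ℝ)
      = 2 * q ^ e.card + e.card * (q ^ (e.card - 1) * p) := by
  have step1 : ∀ σ : V → Bool, (∏ v, (if σ v then p else q)) *
        ((2 - (e.filter (fun v => σ v = true)).card : ℕ) : ℝ)
      = 2 * ((∏ v, (if σ v then p else q)) *
            ((∏ v ∈ e, (if σ v then (0:ℝ) else 1)) *
             ∏ v ∈ (∅ : Finset V), (if σ v then (1:ℝ) else 0)))
        + ∑ u ∈ e, (∏ v, (if σ v then p else q)) *
            ((∏ v ∈ e.erase u, (if σ v then (0:ℝ) else 1)) *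
             ∏ v ∈ ({u} : Finset V), (if σ v then (1:ℝ) else 0)) := by
    intro σ
    rw [decomp σ e, mul_add, Finset.mul_sum]
    congr 1
    · simp; ring
    · refine Finset.sum_congr rfl fun u _ => ?_
      rw [Finset.prod_singleton]
  rw [Finset.sum_congr rfl fun σ _ => step1 σ, Finset.sum_add_distrib, ← Finset.mul_sum,
    exp_ind p q hpq e ∅ (Finset.disjoint_empty_right e), Finset.sum_comm]
  have step2 : ∀ u ∈ e, ∑ σ : V → Bool, (∏ v, (if σ v then p else q)) *
            ((∏ v ∈ e.erase u, (if σ v then (0:ℝ) else 1)) *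
             ∏ v ∈ ({u} : Finset V), (if σ v then (1:ℝ) else 0))
      = q ^ (e.card - 1) * p := by
    intro u hu
    rw [exp_ind p q hpq (e.erase u) {u}
      (Finset.disjoint_singleton_right.mpr (Finset.notMem_erase u e)),
      Finset.card_erase_of_mem hu]
    simp
  rw [Finset.sum_congr rfl step2, Finset.sum_const, nsmul_eq_mul]
  simp

lemma sum_w (p q : ℝ) (hpq : p + q = 1) :
    ∑ σ : V → Bool, ∏ v, (if σ v then p else q) = 1 := by
  have := exp_ind p q hpq (∅ : Finset V) (∅ : Finset V) (Finset.disjoint_empty_right _)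
  simpa using this

lemma exp_card (p q : ℝ) (hpq : p + q = 1) :
    ∑ σ : V → Bool, (∏ v, (if σ v then p else q)) *
        ((univ.filter (fun v => σ v = true)).card : ℝ)
      = p * Fintype.card V := by
  have hcard : ∀ σ : V → Bool, ((univ.filter (fun v => σ v = true)).card : ℝ)
      = ∑ v : V, (if σ v then (1:ℝ) else 0) := by
    intro σ
    rw [Finset.card_filter]
    push_cast
    exact Finset.sum_congr rfl fun v _ => by by_cases h : σ v = true <;> simp [h]
  have step : ∀ σ : V → Bool, (∏ v, (if σ v then p else q)) *
        ((univ.filter (fun v => σ v = true)).card : ℝ)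
      = ∑ v : V, (∏ u, (if σ u then p else q)) *
          ((∏ u ∈ (∅ : Finset V), (if σ u then (0:ℝ) else 1)) *
           ∏ u ∈ ({v} : Finset V), (if σ u then (1:ℝ) else 0)) := by
    intro σ
    rw [hcard, Finset.mul_sum]
    exact Finset.sum_congr rfl fun v _ => by rw [Finset.prod_empty, Finset.prod_singleton, one_mul]
  rw [Finset.sum_congr rfl fun σ _ => step σ, Finset.sum_comm]
  have inner : ∀ v : V, ∑ σ : V → Bool, (∏ u, (if σ u then p else q)) *
          ((∏ u ∈ (∅ : Finset V), (if σ u then (0:ℝ) else 1)) *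
           ∏ u ∈ ({v} : Finset V), (if σ u then (1:ℝ) else 0)) = p := by
    intro v
    rw [exp_ind p q hpq ∅ {v} (Finset.disjoint_empty_left _)]
    simp
  rw [Finset.sum_congr rfl fun v _ => inner v, Finset.sum_const, nsmul_eq_mul,
    Finset.card_univ, mul_comm]

/-- For every constant `c > 1` and every `k`-uniform hypergraph `H` (`k ≥ 2`),
`τ₂(H) ≤ ((ln k + ln c)/(k−1))·n(H) + ((ln k + ln c)/(c(k−1)))·m(H)
  + (2/(ck))·m(H)`. -/
theorem stmt12 (k : ℕ) (hk : 2 ≤ k) (c : ℝ) (hc : 1 < c)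
    (E : Finset (Finset V)) (hu : Uniform k E) :
    (tau2 E : ℝ) ≤
      ((Real.log k + Real.log c) / ((k : ℝ) - 1)) * Fintype.card V +
      ((Real.log k + Real.log c) / (c * ((k : ℝ) - 1))) * E.card +
      (2 / (c * (k : ℝ))) * E.card := by
  have hkR : (2:ℝ) ≤ (k:ℝ) := by exact_mod_cast hk
  have hk1 : (1:ℝ) < (k:ℝ) := by linarith
  have hkm : (0:ℝ) < (k:ℝ) - 1 := by linarith
  have hc0 : (0:ℝ) < c := lt_trans one_pos hc
  have hL : 0 < Real.log k + Real.log c := add_pos (Real.log_pos hk1) (Real.log_pos hc)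
  set L := Real.log k + Real.log c with hLdef
  set p := L / ((k:ℝ) - 1) with hpdef
  have hp0 : 0 < p := div_pos hL hkm
  have hck : (0:ℝ) < c * (k:ℝ) := by positivity
  have hm0 : (0:ℝ) ≤ E.card := Nat.cast_nonneg _
  by_cases hp1 : 1 ≤ p
  · -- trivial case: take all vertices
    have h1 : tau2 E ≤ Fintype.card V := by
      refine Nat.sInf_le ⟨univ, fun e he => ?_, Finset.card_univ⟩
      rw [Finset.inter_univ, hu e he]; exact hk
    have h2 : (tau2 E : ℝ) ≤ Fintype.card V := by exact_mod_cast h1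
    have h3 : (Fintype.card V : ℝ) ≤ p * Fintype.card V :=
      le_mul_of_one_le_left (Nat.cast_nonneg _) hp1
    have t2 : 0 ≤ L / (c * ((k:ℝ) - 1)) * E.card :=
      mul_nonneg (div_nonneg hL.le (by positivity)) hm0
    have t3 : 0 ≤ 2 / (c * (k:ℝ)) * E.card :=
      mul_nonneg (div_nonneg (by norm_num) hck.le) hm0
    rw [hpdef] at h3
    linarith
  · push_neg at hp1
    set q := 1 - p with hqdef
    have hq0 : 0 < q := by rw [hqdef]; linarith
    have hq1 : q ≤ 1 := by rw [hqdef]; linarith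
    have hpq : p + q = 1 := by rw [hqdef]; ring
    set S : (V → Bool) → Finset V := fun σ => univ.filter (fun v => σ v = true) with hS
    have hinter : ∀ (σ : V → Bool) (e : Finset V),
        e ∩ S σ = e.filter (fun v => σ v = true) := by
      intro σ e; ext v; simp [hS]
    set w : (V → Bool) → ℝ := fun σ => ∏ v, (if σ v then p else q) with hw
    have hwpos : ∀ σ, 0 < w σ := fun σ => Finset.prod_pos fun v _ => by
      by_cases h : σ v <;> simp [h, hp0, hq0]
    set F : (V → Bool) → ℕ := fun σ => (S σ).card + ∑ e ∈ E, (2 - (e ∩ S σ).card) with hF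
    set μ : ℝ := p * Fintype.card V + E.card * (2 * q ^ k + k * (q ^ (k - 1) * p)) with hμ
    have hsum : ∑ σ : V → Bool, w σ * (F σ : ℝ) = μ := by
      have hFc : ∀ σ, (F σ : ℝ) = ((S σ).card : ℝ)
          + ∑ e ∈ E, ((2 - (e ∩ S σ).card : ℕ) : ℝ) := by
        intro σ; rw [hF]; push_cast; ring
      calc ∑ σ : V → Bool, w σ * (F σ : ℝ)
          = ∑ σ : V → Bool, (w σ * ((S σ).card : ℝ)
              + ∑ e ∈ E, w σ * ((2 - (e ∩ S σ).card : ℕ) : ℝ)) := by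
            refine Finset.sum_congr rfl fun σ _ => ?_
            rw [hFc, mul_add, Finset.mul_sum]
        _ = (∑ σ : V → Bool, w σ * ((S σ).card : ℝ))
              + ∑ e ∈ E, ∑ σ : V → Bool, w σ * ((2 - (e ∩ S σ).card : ℕ) : ℝ) := by
            rw [Finset.sum_add_distrib, Finset.sum_comm]
        _ = μ := by
            have hedge : ∀ e ∈ E, ∑ σ : V → Bool, w σ * ((2 - (e ∩ S σ).card : ℕ) : ℝ)
                = 2 * q ^ k + (k : ℝ) * (q ^ (k - 1) * p) := by
              intro e he
              have h1 := exp_edge p q hpq e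
              rw [hu e he] at h1
              calc ∑ σ : V → Bool, w σ * ((2 - (e ∩ S σ).card : ℕ) : ℝ)
                  = ∑ σ : V → Bool, (∏ v, (if σ v then p else q)) *
                      ((2 - (e.filter (fun v => σ v = true)).card : ℕ) : ℝ) := by
                    refine Finset.sum_congr rfl fun σ _ => by rw [hw, hinter]
                _ = 2 * q ^ k + (k : ℝ) * (q ^ (k - 1) * p) := h1
            rw [exp_card p q hpq, Finset.sum_congr rfl hedge, Finset.sum_const,
              nsmul_eq_mul, hμ]
    have havg : ∃ σ : V → Bool, (F σ : ℝ) ≤ μ := by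
      by_contra h
      push_neg at h
      have hlt : ∑ σ : V → Bool, w σ * μ < ∑ σ : V → Bool, w σ * (F σ : ℝ) :=
        Finset.sum_lt_sum_of_nonempty Finset.univ_nonempty
          (fun σ _ => mul_lt_mul_of_pos_left (h σ) (hwpos σ))
      rw [← Finset.sum_mul, hw, sum_w p q hpq, one_mul, hsum] at hlt
      exact lt_irrefl μ hlt
    obtain ⟨σ, hσ⟩ := havg
    have htau : (tau2 E : ℝ) ≤ (F σ : ℝ) := by
      exact_mod_cast lemA k hk E hu (S σ)
    -- numeric bounds
    have hqe : q ≤ Real.exp (-p) := by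
      have := Real.add_one_le_exp (-p); rw [hqdef]; linarith
    have hqk : q ^ (k - 1) ≤ 1 / (c * (k : ℝ)) := by
      have hcast : ((k - 1 : ℕ) : ℝ) = (k : ℝ) - 1 := by
        have : (1:ℕ) ≤ k := by omega
        push_cast [this]; ring
      calc q ^ (k - 1) ≤ Real.exp (-p) ^ (k - 1) := pow_le_pow_left₀ hq0.le hqe _
        _ = Real.exp (-(p * ((k:ℝ) - 1))) := by
            rw [← Real.exp_nat_mul, hcast]; ring_nf
        _ = 1 / (c * (k : ℝ)) := by
            rw [hpdef, div_mul_cancel₀ _ hkm.ne', Real.exp_neg, Real.exp_add,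
              Real.exp_log (by positivity : (0:ℝ) < (k:ℝ)), Real.exp_log hc0]
            rw [one_div, mul_comm]
    have hbound : 2 * q ^ k + (k : ℝ) * (q ^ (k - 1) * p)
        ≤ 2 / (c * (k:ℝ)) + L / (c * ((k:ℝ) - 1)) := by
      have h1 : q ^ k ≤ q ^ (k - 1) :=
        pow_le_pow_of_le_one hq0.le hq1 (Nat.sub_le k 1)
      have h3 : (k:ℝ) * (q ^ (k - 1) * p) ≤ (k:ℝ) * ((1 / (c * (k:ℝ))) * p) :=
        mul_le_mul_of_nonneg_left (mul_le_mul_of_nonneg_right hqk hp0.le) (by positivity)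
      have h4 : (k:ℝ) * ((1 / (c * (k:ℝ))) * p) = p / c := by
        field_simp
      have h5 : p / c = L / (c * ((k:ℝ) - 1)) := by
        rw [hpdef, div_div, mul_comm]
      have h6 : q ^ k ≤ 1 / (c * (k:ℝ)) := h1.trans hqk
      have h7 : 2 / (c * (k:ℝ)) = 2 * (1 / (c * (k:ℝ))) := by ring
      linarith
    have hmu : μ ≤ p * Fintype.card V
        + E.card * (2 / (c * (k:ℝ)) + L / (c * ((k:ℝ) - 1))) := by
      rw [hμ]
      have := mul_le_mul_of_nonneg_left hbound hm0
      linarith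
    calc (tau2 E : ℝ) ≤ (F σ : ℝ) := htau
      _ ≤ μ := hσ
      _ ≤ p * Fintype.card V
          + E.card * (2 / (c * (k:ℝ)) + L / (c * ((k:ℝ) - 1))) := hmu
      _ = p * Fintype.card V + L / (c * ((k:ℝ) - 1)) * E.card
          + 2 / (c * (k:ℝ)) * E.card := by ring
end

section
/- Let k ≥ 3, let F be a k-uniform hypergraph with no isolated vertices, no isolated edges, no multiple edges, and with no two edges intersecting in exactly k−1 vertices; let H be obtained from F by adding, for each vertex v of F, k+1 new vertices v₁,…,v_{k+1} and two new k-edges {v,v₁,…,v_{k−1}} and {v₂,…,v_{k+1}}. Then γ_t(H) = 2·n(H)/(k+2). -/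
open Finset

attribute [local instance] Classical.propDecidable

variable {V : Type*} [Fintype V] [DecidableEq V]

/-- For a vertex `v` of `F`, the added edge `{v, v₁, …, v_{k−1}}`, where the new
vertex `v_j` (for `1 ≤ j ≤ k+1`) is encoded as `Sum.inr (v, j-1)` with
`j - 1 : Fin (k+1)`. -/
noncomputable def star1 {α : Type*} (k : ℕ) (v : α) : Finset (α ⊕ α × Fin (k + 1)) :=
  insert (Sum.inl v)
    ((univ.filter (fun i : Fin (k + 1) => (i : ℕ) < k - 1)).image
      (fun i => Sum.inr (v, i)))

/-- For a vertex `v` of `F`, the added edge `{v₂, …, v_{k+1}}`. -/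
noncomputable def star2 {α : Type*} (k : ℕ) (v : α) : Finset (α ⊕ α × Fin (k + 1)) :=
  (univ.filter (fun i : Fin (k + 1) => 1 ≤ (i : ℕ))).image (fun i => Sum.inr (v, i))


section AuxProof17
variable {α : Type*}

lemma mem_star1_iff17 (k : ℕ) (v : α) (x : α ⊕ α × Fin (k+1)) :
    x ∈ star1 k v ↔ x = Sum.inl v ∨ ∃ i : Fin (k+1), (i:ℕ) < k - 1 ∧ x = Sum.inr (v, i) := by
  classical
  simp [star1, eq_comm]

lemma mem_star2_iff17 (k : ℕ) (v : α) (x : α ⊕ α × Fin (k+1)) :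
    x ∈ star2 k v ↔ ∃ i : Fin (k+1), 1 ≤ (i:ℕ) ∧ x = Sum.inr (v, i) := by
  classical
  simp [star2, eq_comm]

lemma fin_one_val17 (k : ℕ) (hk : 3 ≤ k) : ((1 : Fin (k+1)) : ℕ) = 1 := by
  rw [Fin.val_one', Nat.mod_eq_of_lt (by omega)]

end AuxProof17

/-- Let `k ≥ 3`, let `F` be a `k`-uniform hypergraph with no isolated vertices,
no isolated edges, no multiple edges, and with no two edges intersecting in
exactly `k−1` vertices; let `H` be obtained from `F` by adding, for each vertex
`v` of `F`, `k+1` new vertices `v₁, …, v_{k+1}` and the two new `k`-edges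
`{v, v₁, …, v_{k−1}}` and `{v₂, …, v_{k+1}}`. Then `γ_t(H) = 2·n(H)/(k+2)`. -/

theorem stmt17 {α : Type*} [Fintype α] [DecidableEq α] (k : ℕ) (hk : 3 ≤ k)
    (EF : Finset (Finset α)) (hu : Uniform k EF)
    (hv : ∀ v : α, ∃ e ∈ EF, v ∈ e) (he : NoIsolatedEdge EF)
    (hstar : ∀ e ∈ EF, ∀ f ∈ EF, e ≠ f → (e ∩ f).card ≠ k - 1) :
    (gammat (EF.image (fun e => e.image Sum.inl) ∪
        univ.image (star1 k) ∪ univ.image (star2 k)) : ℝ) =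
      2 * Fintype.card (α ⊕ α × Fin (k + 1)) / ((k : ℝ) + 2) := by
  classical
  set E : Finset (Finset (α ⊕ α × Fin (k+1))) :=
    (EF.image (fun e => e.image Sum.inl) ∪ univ.image (star1 k) ∪ univ.image (star2 k)) with hE
  have hstar1E : ∀ v : α, star1 k v ∈ E := fun v =>
    mem_union_left _ (mem_union_right _ (mem_image_of_mem _ (mem_univ v)))
  have hstar2E : ∀ v : α, star2 k v ∈ E := fun v =>
    mem_union_right _ (mem_image_of_mem _ (mem_univ v))
  have h1 : ((1 : Fin (k+1)) : ℕ) = 1 := fin_one_val17 k hk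
  set g : (α ⊕ α × Fin (k+1)) → α := Sum.elim id Prod.fst with hg
  have hg_star : ∀ (v : α) (x : α ⊕ α × Fin (k+1)),
      (x ∈ star1 k v ∨ x ∈ star2 k v) → g x = v := by
    intro v x hx
    rcases hx with hx | hx
    · rcases (mem_star1_iff17 k v x).1 hx with rfl | ⟨i, _, rfl⟩ <;> rfl
    · rcases (mem_star2_iff17 k v x).1 hx with ⟨i, _, rfl⟩; rfl
  have hedge : ∀ e ∈ E, ∀ (v : α) (i : Fin (k+1)), Sum.inr (v, i) ∈ e →
      e = star1 k v ∨ e = star2 k v := by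
    intro e heE v i hvi
    rcases mem_union.1 heE with heE' | heE'
    · rcases mem_union.1 heE' with heE'' | heE''
      · rcases mem_image.1 heE'' with ⟨f, _, rfl⟩
        rcases mem_image.1 hvi with ⟨a, _, ha⟩
        exact absurd ha (by simp)
      · rcases mem_image.1 heE'' with ⟨w, _, rfl⟩
        left
        rcases (mem_star1_iff17 k w _).1 hvi with h | ⟨j, _, hj⟩
        · exact absurd h (by simp)
        · obtain ⟨rfl, rfl⟩ : v = w ∧ i = j := by simpa using hj
          rfl
    · rcases mem_image.1 heE' with ⟨w, _, rfl⟩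
      right
      rcases (mem_star2_iff17 k w _).1 hvi with ⟨j, _, hj⟩
      obtain ⟨rfl, rfl⟩ : v = w ∧ i = j := by simpa using hj
      rfl
  have hkk : k < k + 1 := Nat.lt_succ_self k
  have hmain : gammat E = 2 * Fintype.card α := by
    set D0 : Finset (α ⊕ α × Fin (k+1)) :=
      univ.image Sum.inl ∪ univ.image (fun v : α => Sum.inr (v, (1 : Fin (k+1)))) with hD0
    have hD0dom : ∀ x : α ⊕ α × Fin (k+1), ∃ u ∈ D0, HAdj E x u := by
      rintro (v | ⟨v, i⟩)
      · refine ⟨Sum.inr (v, 1), mem_union_right _ (mem_image_of_mem _ (mem_univ v)),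
          by simp, star1 k v, hstar1E v, (mem_star1_iff17 k v _).2 (Or.inl rfl),
          (mem_star1_iff17 k v _).2 (Or.inr ⟨1, by rw [h1]; omega, rfl⟩)⟩
      · by_cases hi : (i : ℕ) < k - 1
        · refine ⟨Sum.inl v, mem_union_left _ (mem_image_of_mem _ (mem_univ v)),
            by simp, star1 k v, hstar1E v,
            (mem_star1_iff17 k v _).2 (Or.inr ⟨i, hi, rfl⟩),
            (mem_star1_iff17 k v _).2 (Or.inl rfl)⟩
        · refine ⟨Sum.inr (v, 1), mem_union_right _ (mem_image_of_mem _ (mem_univ v)),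
            ?_, star2 k v, hstar2E v,
            (mem_star2_iff17 k v _).2 ⟨i, by omega, rfl⟩,
            (mem_star2_iff17 k v _).2 ⟨1, by rw [h1], rfl⟩⟩
          simp only [ne_eq, Sum.inr.injEq, Prod.mk.injEq, not_and]
          rintro - rfl
          rw [h1] at hi; omega
    have hD0card : D0.card = 2 * Fintype.card α := by
      rw [hD0, card_union_of_disjoint, card_image_of_injective _ Sum.inl_injective,
        card_image_of_injective _ (fun a b h => by simpa using h), card_univ]
      · ring
      · rw [Finset.disjoint_left]
        rintro x hx hx'
        rcases mem_image.1 hx with ⟨a, _, rfl⟩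
        rcases mem_image.1 hx' with ⟨b, _, hb⟩
        exact absurd hb (by simp)
    have hub : gammat E ≤ 2 * Fintype.card α := Nat.sInf_le ⟨D0, hD0dom, hD0card⟩
    have hlb : ∀ n ∈ {n | ∃ D : Finset (α ⊕ α × Fin (k+1)),
        (∀ v, ∃ u ∈ D, HAdj E v u) ∧ D.card = n}, 2 * Fintype.card α ≤ n := by
      rintro n ⟨D, hdom, rfl⟩
      have hfib : ∀ v : α, 2 ≤ (D.filter (fun x => g x = v)).card := by
        intro v
        set i0 : Fin (k+1) := ⟨k, hkk⟩ with hi0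
        obtain ⟨u, huD, hune, e, heE, hxe, hue⟩ := hdom (Sum.inr (v, i0))
        have he2 : e = star2 k v := by
          rcases hedge e heE v i0 hxe with h | h
          · exfalso
            rcases (mem_star1_iff17 k v _).1 (h ▸ hxe) with h' | ⟨j, hj, h'⟩
            · exact absurd h' (by simp)
            · obtain ⟨-, rfl⟩ : v = v ∧ i0 = j := by simpa using h'
              have hj' : k < k - 1 := hj
              omega
          · exact h
        have hgu : g u = v := hg_star v u (Or.inr (he2 ▸ hue))
        obtain ⟨j, rfl⟩ : ∃ j : Fin (k+1), u = Sum.inr (v, j) := by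
          rcases (mem_star2_iff17 k v u).1 (he2 ▸ hue) with ⟨j, _, h⟩
          exact ⟨j, h⟩
        obtain ⟨w, hwD, hwne, f, hfE, huf, hwf⟩ := hdom (Sum.inr (v, j))
        have hgw : g w = v := by
          rcases hedge f hfE v j huf with h | h
          · exact hg_star v w (Or.inl (h ▸ hwf))
          · exact hg_star v w (Or.inr (h ▸ hwf))
        have h2 : 1 < (D.filter (fun x => g x = v)).card :=
          Finset.one_lt_card.2 ⟨Sum.inr (v, j), mem_filter.2 ⟨huD, hgu⟩,
            w, mem_filter.2 ⟨hwD, hgw⟩, hwne⟩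
        exact h2
      have hsum := Finset.card_eq_sum_card_fiberwise
        (f := g) (s := D) (t := univ) (fun x _ => mem_univ _)
      rw [hsum]
      calc 2 * Fintype.card α = ∑ _v : α, 2 := by
            rw [Finset.sum_const, card_univ, smul_eq_mul]; ring
        _ ≤ ∑ v : α, (D.filter fun x => g x = v).card :=
            Finset.sum_le_sum (fun v _ => hfib v)
    exact le_antisymm hub
      (le_csInf ⟨2 * Fintype.card α, D0, hD0dom, hD0card⟩ hlb)
  rw [hmain]
  have hcard : (Fintype.card (α ⊕ α × Fin (k+1)) : ℝ) = (Fintype.card α) * ((k:ℝ) + 2) := by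
    simp only [Fintype.card_sum, Fintype.card_prod, Fintype.card_fin]
    push_cast; ring
  rw [hcard]
  have hne : (k:ℝ) + 2 ≠ 0 := by positivity
  push_cast
  field_simp
end
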